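/- arXiv:0707.0994 — 6 statements merged into one kernel-verified Lean document; each statement's English description precedes it below -/
import Mathlib

section
/- Let A ⊆ B ⊆ G_E with A and B internal and non-empty. Then for each representative net (A_ε) of A there exists a representative net (B_ε) of B such that A_ε ⊆ B_ε for all ε ∈ (0,1). -/
open Filter Topology Asymptotics

noncomputable section

namespace ColombeauPaper

variable {ι κ : Type*} {E : Type*} [AddCommGroup E] [Module ℝ E]
  {F : Type*} [AddCommGroup F] [Module ℝ F]

/-- A net `(u_ε)` in `E` is moderate for the family of seminorms `p` if for every `i`
there is `M ∈ ℕ` with `p i (u_ε) ≤ ε ^ (-M)` for all sufficiently small `ε > 0`. -/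
def IsModerate (p : ι → Seminorm ℝ E) (u : ℝ → E) : Prop :=
  ∀ i, ∃ M : ℕ, ∀ᶠ ε in 𝓝[>] (0 : ℝ), p i (u ε) ≤ ε ^ (-(M : ℤ))

/-- A net `(u_ε)` in `E` is negligible if for every `i` and every `m ∈ ℕ` one has
`p i (u_ε) ≤ ε ^ m` for all sufficiently small `ε > 0`. -/
def IsNegligible (p : ι → Seminorm ℝ E) (u : ℝ → E) : Prop :=
  ∀ i, ∀ m : ℕ, ∀ᶠ ε in 𝓝[>] (0 : ℝ), p i (u ε) ≤ ε ^ m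

/-- A negligible net of real numbers. -/
def IsNegligibleR (n : ℝ → ℝ) : Prop :=
  ∀ m : ℕ, ∀ᶠ ε in 𝓝[>] (0 : ℝ), |n ε| ≤ ε ^ m

lemma small_mem : {ε : ℝ | 0 < ε ∧ ε ≤ 1 / 2} ∈ 𝓝[>] (0 : ℝ) := by
  have h : Set.Ioo (0 : ℝ) (1 / 2) ∈ 𝓝[>] (0 : ℝ) :=
    Ioo_mem_nhdsGT_of_mem ⟨le_refl 0, by norm_num⟩
  filter_upwards [h] with ε hε
  exact ⟨hε.1, hε.2.le⟩

lemma zpow_neg_natCast_eq {ε : ℝ} (k : ℕ) : ε ^ (-(k : ℤ)) = ε⁻¹ ^ (k : ℤ) := by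
  rw [zpow_neg, inv_zpow]

/-- The moderate nets form an additive subgroup of `(0,1) → E` (here modelled on `ℝ → E`,
with all conditions holding for sufficiently small `ε > 0`). -/
def moderateGroup (p : ι → Seminorm ℝ E) : AddSubgroup (ℝ → E) where
  carrier := {u | IsModerate p u}
  zero_mem' := by
    intro i
    refine ⟨0, ?_⟩
    filter_upwards [self_mem_nhdsWithin] with ε hε
    have hε' : (0 : ℝ) < ε := hε
    simp only [Pi.zero_apply, map_zero]
    positivity
  add_mem' := by
    intro u v hu hv i
    obtain ⟨M, hM⟩ := hu i
    obtain ⟨N, hN⟩ := hv i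
    refine ⟨max M N + 1, ?_⟩
    filter_upwards [hM, hN, small_mem] with ε h1 h2 h3
    obtain ⟨hε, hε2⟩ := h3
    have hinv : (1 : ℝ) ≤ ε⁻¹ := (one_le_inv₀ hε).2 (by linarith)
    have h2inv : (2 : ℝ) ≤ ε⁻¹ := by
      nlinarith [mul_inv_cancel₀ (ne_of_gt hε)]
    have key : ∀ k l : ℕ, k ≤ l → ε ^ (-(k : ℤ)) ≤ ε ^ (-(l : ℤ)) := by
      intro k l hkl
      rw [zpow_neg_natCast_eq, zpow_neg_natCast_eq]
      exact zpow_le_zpow_right₀ hinv (by exact_mod_cast hkl)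
    set K : ℕ := max M N with hK
    have h1' : p i (u ε) ≤ ε ^ (-(K : ℤ)) := h1.trans (key M K (le_max_left _ _))
    have h2' : p i (v ε) ≤ ε ^ (-(K : ℤ)) := h2.trans (key N K (le_max_right _ _))
    have tri : p i ((u + v) ε) ≤ p i (u ε) + p i (v ε) := by
      simpa using map_add_le_add (p i) (u ε) (v ε)
    have efin : ε ^ (-(K : ℤ)) * 2 ≤ ε ^ (-((K + 1 : ℕ) : ℤ)) := by
      rw [zpow_neg_natCast_eq, zpow_neg_natCast_eq]
      push_cast
      have hnn : (0:ℝ) ≤ ε⁻¹ ^ (K : ℤ) := by positivity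
      calc ε⁻¹ ^ (K : ℤ) * 2 ≤ ε⁻¹ ^ (K : ℤ) * ε⁻¹ :=
            mul_le_mul_of_nonneg_left h2inv hnn
        _ = ε⁻¹ ^ ((K : ℤ) + 1) := by rw [zpow_add₀ (by positivity : (ε⁻¹ : ℝ) ≠ 0), zpow_one]
    push_cast at efin ⊢
    linarith
  neg_mem' := by
    intro u hu i
    obtain ⟨M, hM⟩ := hu i
    refine ⟨M, ?_⟩
    filter_upwards [hM] with ε h
    simpa [map_neg_eq_map] using h

/-- The negligible nets form an additive subgroup of the moderate ones. -/
def negligibleGroup (p : ι → Seminorm ℝ E) : AddSubgroup (moderateGroup p) where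
  carrier := {u | IsNegligible p (u : ℝ → E)}
  zero_mem' := by
    intro i m
    filter_upwards [self_mem_nhdsWithin] with ε hε
    have hε' : (0 : ℝ) < ε := hε
    simp only [AddSubgroup.coe_zero, Pi.zero_apply, map_zero]
    positivity
  add_mem' := by
    intro u v hu hv i m
    filter_upwards [hu i (m + 1), hv i (m + 1), small_mem] with ε h1 h2 h3
    obtain ⟨hε, hε2⟩ := h3
    have tri : p i (((u + v : moderateGroup p) : ℝ → E) ε)
        ≤ p i ((u : ℝ → E) ε) + p i ((v : ℝ → E) ε) := by
      simpa using map_add_le_add (p i) ((u : ℝ → E) ε) ((v : ℝ → E) ε)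
    have hpow : ε ^ (m + 1) = ε ^ m * ε := pow_succ ε m
    nlinarith [pow_nonneg hε.le m]
  neg_mem' := by
    intro u hu i m
    filter_upwards [hu i m] with ε h
    have : ((-u : moderateGroup p) : ℝ → E) ε = -((u : ℝ → E) ε) := rfl
    rw [this, map_neg_eq_map]
    exact h

/-- The Colombeau space based on `E` (with the family of seminorms `p`):
the quotient of the moderate nets by the negligible ones. -/
abbrev Colombeau (p : ι → Seminorm ℝ E) : Type _ :=
  moderateGroup p ⧸ negligibleGroup p

/-- The internal subset of `𝒢_E` generated by a net `(A_ε)` of subsets of `E`: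
all `u` having a representative `(u_ε)` with `u_ε ∈ A_ε` for sufficiently small `ε`. -/
def internalSet (p : ι → Seminorm ℝ E) (A : ℝ → Set E) : Set (Colombeau p) :=
  {u | ∃ w : moderateGroup p, (QuotientAddGroup.mk w : Colombeau p) = u ∧
        ∀ᶠ ε in 𝓝[>] (0 : ℝ), (w : ℝ → E) ε ∈ A ε}

/-- A subset of `𝒢_E` is internal if it is generated by some net of subsets of `E`. -/
def IsInternal (p : ι → Seminorm ℝ E) (A : Set (Colombeau p)) : Prop :=
  ∃ Anet : ℝ → Set E, A = internalSet p Anet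

/-- `d_i(u, A) = inf_{v ∈ A} p_i (u - v)`, with value `+∞` for `A = ∅`. -/
def semiDist (p : ι → Seminorm ℝ E) (i : ι) (u : E) (A : Set E) : EReal :=
  ⨅ v ∈ A, ((p i (u - v) : ℝ) : EReal)

/-- A sharply bounded net of subsets of `E`. -/
def SharplyBoundedNet (p : ι → Seminorm ℝ E) (A : ℝ → Set E) : Prop :=
  ∀ i, ∃ M : ℕ, ∀ᶠ ε in 𝓝[>] (0 : ℝ), ∀ w ∈ A ε, p i w ≤ ε ^ (-(M : ℤ))

/-- `p_i(u) ≤ α ^ t` in `ℝ̃` (where `α` is the class of `(ε)_ε`): some representative of the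
net of seminorms is bounded by `ε ^ t` up to a negligible net for small `ε`. -/
def seminormLeAlpha (p : ι → Seminorm ℝ E) (i : ι) (u : Colombeau p) (t : ℝ) : Prop :=
  ∃ (w : moderateGroup p) (n : ℝ → ℝ), (QuotientAddGroup.mk w : Colombeau p) = u ∧
    IsNegligibleR n ∧ ∀ᶠ ε in 𝓝[>] (0 : ℝ), p i ((w : ℝ → E) ε) ≤ ε ^ t + n ε

/-- The ultra-pseudo-seminorm `u ↦ |p_i(u)|_s = e^{-ν(p_i(u))}` on `𝒢_E`, where
`ν(x) = sup {b : |x_ε| = O(ε^b)}` is the valuation. -/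
def sharpSemi (p : ι → Seminorm ℝ E) (i : ι) (u : Colombeau p) : ℝ :=
  sInf {r : ℝ | ∃ (b : ℝ) (w : moderateGroup p), (QuotientAddGroup.mk w : Colombeau p) = u ∧
    r = Real.exp (-b) ∧ (fun ε => (p i ((w : ℝ → E) ε) : ℝ)) =O[𝓝[>] (0 : ℝ)] fun ε => ε ^ b}

/-- The sharp topology on `𝒢_E`: the topology generated by the ultra-pseudo-seminorms
`u ↦ |p_i(u)|_s`, i.e. generated by all the corresponding balls. -/
def sharpTopology (p : ι → Seminorm ℝ E) : TopologicalSpace (Colombeau p) :=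
  TopologicalSpace.generateFrom
    {B | ∃ (u : Colombeau p) (i : ι) (r : ℝ), 0 < r ∧
          B = {v | sharpSemi p i (v - u) < r}}

lemma indicator_norm_le_one (S : Set ℝ) (ε : ℝ) :
    ‖S.indicator (fun _ => (1 : ℝ)) ε‖ ≤ 1 := by
  by_cases h : ε ∈ S <;>
    simp [Set.indicator_of_mem, Set.indicator_of_notMem, h]

lemma eAux_le (p : ι → Seminorm ℝ E) (S : Set ℝ) (i : ι) (ε : ℝ) (x : E) :
    p i (S.indicator (fun _ => (1 : ℝ)) ε • x) ≤ p i x := by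
  rw [map_smul_eq_mul]
  calc ‖S.indicator (fun _ => (1 : ℝ)) ε‖ * p i x ≤ 1 * p i x :=
        mul_le_mul_of_nonneg_right (indicator_norm_le_one S ε) (apply_nonneg _ _)
    _ = p i x := one_mul _

/-- Multiplication by the characteristic function `χ_S`, on representatives. -/
def eAux (p : ι → Seminorm ℝ E) (S : Set ℝ) : moderateGroup p →+ moderateGroup p where
  toFun u := ⟨fun ε => S.indicator (fun _ => (1 : ℝ)) ε • (u : ℝ → E) ε, by
    have hu : IsModerate p (u : ℝ → E) := u.2
    intro i
    obtain ⟨M, hM⟩ := hu i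
    refine ⟨M, ?_⟩
    filter_upwards [hM] with ε hε
    exact (eAux_le p S i ε _).trans hε⟩
  map_zero' := by
    apply Subtype.ext
    funext ε
    simp
  map_add' u v := by
    apply Subtype.ext
    funext ε
    simp [smul_add]

/-- Multiplication by `e_S`, the class of the characteristic function of `S ⊆ (0,1)`,
as a map `𝒢_E → 𝒢_E`. -/
def eMul (p : ι → Seminorm ℝ E) (S : Set ℝ) : Colombeau p →+ Colombeau p :=
  QuotientAddGroup.map _ _ (eAux p S) (by
    intro u hu
    rw [AddSubgroup.mem_comap]
    have hu' : IsNegligible p (u : ℝ → E) := hu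
    show IsNegligible p _
    intro i m
    filter_upwards [hu' i m] with ε hε
    exact (eAux_le p S i ε _).trans hε)

/-- The set of finite interleavings `∑_{j=1}^m e_{S_j} a_j` of elements of `A`,
over partitions `{S_1, …, S_m}` of `(0,1)`. -/
def interleaving (p : ι → Seminorm ℝ E) (A : Set (Colombeau p)) : Set (Colombeau p) :=
  {u | ∃ (m : ℕ) (S : Fin m → Set ℝ) (a : Fin m → Colombeau p),
        (∀ j, a j ∈ A) ∧ (∀ j, S j ⊆ Set.Ioo 0 1) ∧
        (Pairwise fun j k => Disjoint (S j) (S k)) ∧ (⋃ j, S j) = Set.Ioo 0 1 ∧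
        u = ∑ j, eMul p (S j) (a j)}

/-- The family of seminorms `max (p_i, q_j)` generating the product topology on `E × F`. -/
def prodSeminorm (p : ι → Seminorm ℝ E) (q : κ → Seminorm ℝ F) :
    ι × κ → Seminorm ℝ (E × F) :=
  fun ij => (p ij.1).comp (LinearMap.fst ℝ E F) ⊔ (q ij.2).comp (LinearMap.snd ℝ E F)

lemma prodSeminorm_apply (p : ι → Seminorm ℝ E) (q : κ → Seminorm ℝ F) (i : ι) (j : κ)
    (x : E × F) : prodSeminorm p q (i, j) x = max (p i x.1) (q j x.2) := by
  simp [prodSeminorm, Seminorm.sup_apply, Seminorm.comp_apply]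

/-- First component of a moderate net in `E × F`, as a moderate net in `E`. -/
def prodFstAux [Nonempty κ] (p : ι → Seminorm ℝ E) (q : κ → Seminorm ℝ F) :
    moderateGroup (prodSeminorm p q) →+ moderateGroup p where
  toFun w := ⟨fun ε => ((w : ℝ → E × F) ε).1, by
    have hw : IsModerate (prodSeminorm p q) (w : ℝ → E × F) := w.2
    intro i
    obtain ⟨j⟩ := ‹Nonempty κ›
    obtain ⟨M, hM⟩ := hw (i, j)
    refine ⟨M, ?_⟩
    filter_upwards [hM] with ε hε
    calc p i (((w : ℝ → E × F) ε).1) ≤ prodSeminorm p q (i, j) ((w : ℝ → E × F) ε) := by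
          rw [prodSeminorm_apply]; exact le_max_left _ _
      _ ≤ ε ^ (-(M : ℤ)) := hε⟩
  map_zero' := by apply Subtype.ext; funext ε; simp
  map_add' u v := by apply Subtype.ext; funext ε; simp

/-- Second component of a moderate net in `E × F`, as a moderate net in `F`. -/
def prodSndAux [Nonempty ι] (p : ι → Seminorm ℝ E) (q : κ → Seminorm ℝ F) :
    moderateGroup (prodSeminorm p q) →+ moderateGroup q where
  toFun w := ⟨fun ε => ((w : ℝ → E × F) ε).2, by
    have hw : IsModerate (prodSeminorm p q) (w : ℝ → E × F) := w.2
    intro j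
    obtain ⟨i⟩ := ‹Nonempty ι›
    obtain ⟨M, hM⟩ := hw (i, j)
    refine ⟨M, ?_⟩
    filter_upwards [hM] with ε hε
    calc q j (((w : ℝ → E × F) ε).2) ≤ prodSeminorm p q (i, j) ((w : ℝ → E × F) ε) := by
          rw [prodSeminorm_apply]; exact le_max_right _ _
      _ ≤ ε ^ (-(M : ℤ)) := hε⟩
  map_zero' := by apply Subtype.ext; funext ε; simp
  map_add' u v := by apply Subtype.ext; funext ε; simp

/-- The canonical identification `𝒢_{E × F} ≅ 𝒢_E × 𝒢_F` (given on representatives by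
`[(u_ε, v_ε)] ↦ ([(u_ε)], [(v_ε)])`). -/
def prodIdent [Nonempty ι] [Nonempty κ] (p : ι → Seminorm ℝ E) (q : κ → Seminorm ℝ F) :
    Colombeau (prodSeminorm p q) →+ Colombeau p × Colombeau q :=
  QuotientAddGroup.lift (negligibleGroup (prodSeminorm p q))
    (((QuotientAddGroup.mk' (negligibleGroup p)).comp (prodFstAux p q)).prod
      ((QuotientAddGroup.mk' (negligibleGroup q)).comp (prodSndAux p q)))
    (by
      intro w hw
      have hw' : IsNegligible (prodSeminorm p q) (w : ℝ → E × F) := hw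
      rw [AddMonoidHom.mem_ker]
      refine Prod.ext ?_ ?_
      · show (QuotientAddGroup.mk' (negligibleGroup p)) (prodFstAux p q w) = 0
        rw [QuotientAddGroup.mk'_apply, QuotientAddGroup.eq_zero_iff]
        show IsNegligible p _
        intro i m
        obtain ⟨j⟩ := ‹Nonempty κ›
        filter_upwards [hw' (i, j) m] with ε hε
        calc p i (((w : ℝ → E × F) ε).1)
            ≤ prodSeminorm p q (i, j) ((w : ℝ → E × F) ε) := by
              rw [prodSeminorm_apply]; exact le_max_left _ _
          _ ≤ ε ^ m := hε
      · show (QuotientAddGroup.mk' (negligibleGroup q)) (prodSndAux p q w) = 0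
        rw [QuotientAddGroup.mk'_apply, QuotientAddGroup.eq_zero_iff]
        show IsNegligible q _
        intro j m
        obtain ⟨i⟩ := ‹Nonempty ι›
        filter_upwards [hw' (i, j) m] with ε hε
        calc q j (((w : ℝ → E × F) ε).2)
            ≤ prodSeminorm p q (i, j) ((w : ℝ → E × F) ε) := by
              rw [prodSeminorm_apply]; exact le_max_right _ _
          _ ≤ ε ^ m := hε)

/-- A subset of `𝒢_E × 𝒢_F` is internal if, under the canonical identification
`𝒢_{E×F} ≅ 𝒢_E × 𝒢_F`, it corresponds to an internal subset of `𝒢_{E×F}`. -/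
def IsInternalProd [Nonempty ι] [Nonempty κ] (p : ι → Seminorm ℝ E) (q : κ → Seminorm ℝ F)
    (C : Set (Colombeau p × Colombeau q)) : Prop :=
  ∃ Cnet : ℝ → Set (E × F),
    C = prodIdent p q '' internalSet (prodSeminorm p q) Cnet

section Normed

variable (V : Type*) [NormedAddCommGroup V] [NormedSpace ℝ V]

/-- The norm of a normed space, as a one-element family of seminorms. -/
abbrev normFamily : Unit → Seminorm ℝ V := fun _ => normSeminorm ℝ V

/-- The Colombeau space based on a normed space `V`. -/
abbrev GN := Colombeau (normFamily V)

variable {V}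

/-- `‖u‖ ≤ α ^ t` in `ℝ̃`, where `α` is the class of `(ε)_ε`. -/
def normLeAlpha (u : GN V) (t : ℝ) : Prop :=
  ∃ (w : moderateGroup (normFamily V)) (n : ℝ → ℝ),
    (QuotientAddGroup.mk w : GN V) = u ∧ IsNegligibleR n ∧
    ∀ᶠ ε in 𝓝[>] (0 : ℝ), ‖(w : ℝ → V) ε‖ ≤ ε ^ t + n ε

/-- `‖u‖ ≤ ‖v‖` in `ℝ̃`. -/
def normLeNorm (u v : GN V) : Prop :=
  ∃ (a b : moderateGroup (normFamily V)) (n : ℝ → ℝ),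
    (QuotientAddGroup.mk a : GN V) = u ∧ (QuotientAddGroup.mk b : GN V) = v ∧
    IsNegligibleR n ∧
    ∀ᶠ ε in 𝓝[>] (0 : ℝ), ‖(a : ℝ → V) ε‖ ≤ ‖(b : ℝ → V) ε‖ + n ε

/-- A subset `A ⊆ 𝒢_V` is sharply bounded if `‖u‖ ≤ α^{-M}` for some `M ∈ ℕ` and all `u ∈ A`. -/
def SharplyBounded (A : Set (GN V)) : Prop :=
  ∃ M : ℕ, ∀ u ∈ A, normLeAlpha u (-(M : ℝ))

/-- A sharply bounded net of subsets of the normed space `V`. -/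
def SharplyBoundedNetN (A : ℝ → Set V) : Prop :=
  ∃ M : ℕ, ∀ᶠ ε in 𝓝[>] (0 : ℝ), ∀ w ∈ A ε, ‖w‖ ≤ ε ^ (-(M : ℤ))

end Normed


lemma isModerate_piecewise (p : ι → Seminorm ℝ E) {u v : ℝ → E}
    (hu : IsModerate p u) (hv : IsModerate p v) (c : ℝ → Prop) [DecidablePred c] :
    IsModerate p (fun ε => if c ε then u ε else v ε) := by
  intro i
  obtain ⟨M, hM⟩ := hu i
  obtain ⟨N, hN⟩ := hv i
  refine ⟨max M N, ?_⟩
  filter_upwards [hM, hN, small_mem] with ε h1 h2 h3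
  obtain ⟨hε, hε2⟩ := h3
  have hinv : (1 : ℝ) ≤ ε⁻¹ := (one_le_inv₀ hε).2 (by linarith)
  have key : ∀ k l : ℕ, k ≤ l → ε ^ (-(k : ℤ)) ≤ ε ^ (-(l : ℤ)) := by
    intro k l hkl
    rw [zpow_neg_natCast_eq, zpow_neg_natCast_eq]
    exact zpow_le_zpow_right₀ hinv (by exact_mod_cast hkl)
  by_cases h : c ε
  · simp only [h, if_true]
    exact h1.trans (key M _ (le_max_left _ _))
  · simp only [h, if_false]
    exact h2.trans (key N _ (le_max_right _ _))

/-- If `A ⊆ B ⊆ 𝒢_E` are internal and nonempty, then for each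
representative net `(A_ε)` of `A` there is a representative net `(B_ε)` of `B` with
`A_ε ⊆ B_ε` for all `ε ∈ (0,1)`. -/
theorem exists_nested_representative
    {E : Type*} [AddCommGroup E] [Module ℝ E] {ι : Type*}
    (p : ι → Seminorm ℝ E) (Anet : ℝ → Set E) (B : Set (Colombeau p))
    (hB : IsInternal p B) (hAne : (internalSet p Anet).Nonempty) (hBne : B.Nonempty)
    (hAB : internalSet p Anet ⊆ B) :
    ∃ Bnet : ℝ → Set E, B = internalSet p Bnet ∧
      ∀ ε ∈ Set.Ioo (0 : ℝ) 1, Anet ε ⊆ Bnet ε := by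
  classical
  obtain ⟨Bnet', hBnet'⟩ := hB
  refine ⟨fun ε => Bnet' ε ∪ Anet ε, ?_, fun ε _ => Set.subset_union_right⟩
  subst hBnet'
  apply Set.Subset.antisymm
  · -- easy inclusion
    rintro u ⟨w, hwu, hwmem⟩
    exact ⟨w, hwu, hwmem.mono fun ε h => Or.inl h⟩
  · rintro u ⟨w, hwu, hwmem⟩
    obtain ⟨_, a, -, ha⟩ := hAne
    set S : Set ℝ := {ε | (w : ℝ → E) ε ∈ Anet ε} with hS
    -- the net v : equals w on S, a off S; it lies in Anet eventually
    have hvmod : IsModerate p (fun ε => if ε ∈ S then (w : ℝ → E) ε else (a : ℝ → E) ε) :=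
      isModerate_piecewise p w.2 a.2 _
    set v : moderateGroup p :=
      ⟨fun ε => if ε ∈ S then (w : ℝ → E) ε else (a : ℝ → E) ε, hvmod⟩ with hv
    have hvA : (QuotientAddGroup.mk v : Colombeau p) ∈ internalSet p Anet := by
      refine ⟨v, rfl, ?_⟩
      filter_upwards [ha] with ε haε
      show (if ε ∈ S then (w : ℝ → E) ε else (a : ℝ → E) ε) ∈ Anet ε
      by_cases h : ε ∈ S
      · rw [if_pos h]; exact h
      · rw [if_neg h]; exact haε
    obtain ⟨v', hv'v, hv'mem⟩ := hAB hvA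
    have hneg : IsNegligible p ((-v' + v : moderateGroup p) : ℝ → E) :=
      (QuotientAddGroup.eq (s := negligibleGroup p)).mp hv'v
    -- the net u' : equals v' on S, w off S
    have hu'mod : IsModerate p (fun ε => if ε ∈ S then (v' : ℝ → E) ε else (w : ℝ → E) ε) :=
      isModerate_piecewise p v'.2 w.2 _
    set u' : moderateGroup p :=
      ⟨fun ε => if ε ∈ S then (v' : ℝ → E) ε else (w : ℝ → E) ε, hu'mod⟩ with hu'
    refine ⟨u', ?_, ?_⟩
    · rw [← hwu]
      refine (QuotientAddGroup.eq (s := negligibleGroup p)).mpr ?_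
      show IsNegligible p ((-u' + w : moderateGroup p) : ℝ → E)
      intro i m
      filter_upwards [hneg i m] with ε hε
      by_cases h : ε ∈ S
      · have e1 : ((-u' + w : moderateGroup p) : ℝ → E) ε
            = -((v' : ℝ → E) ε) + (w : ℝ → E) ε := by simp [hu', h]
        have e2 : ((-v' + v : moderateGroup p) : ℝ → E) ε
            = -((v' : ℝ → E) ε) + (w : ℝ → E) ε := by simp [hv, h]
        rw [e1, ← e2]; exact hε
      · have e1 : ((-u' + w : moderateGroup p) : ℝ → E) ε = 0 := by simp [hu', h]
        rw [e1, map_zero]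
        have : (0:ℝ) ≤ p i (((-v' + v : moderateGroup p) : ℝ → E) ε) := apply_nonneg _ _
        linarith
    · filter_upwards [hwmem, hv'mem] with ε h1 h2
      by_cases h : ε ∈ S
      · simp only [hu', h, if_true]; exact h2
      · simp only [hu', h, if_false]
        rcases h1 with h1 | h1
        · exact h1
        · exact absurd h1 h

end ColombeauPaper
end
end

section
/- Suppose the topology of E is generated by an increasing sequence of seminorms (p_n)_{n∈ℕ}. Let A ⊆ G_E be internal, non-empty, with a sharply bounded representative net (A_ε), and let B = [(B_ε)] ⊆ G_E be internal. Then A ⊆ B if and only if for every n ∈ ℕ the net (sup_{u∈A_ε} d_n(u, B_ε))_ε is negligible; this characterization holds for every choice of sharply bounded representative of A and of representative of B. Moreover, if A ⊆ B, then for each representative net (B_ε) of B there exists a sharply bounded representative net (Ã_ε) of A with Ã_ε ⊆ B_ε for all ε ∈ (0,1). -/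
open Filter Topology Asymptotics

noncomputable section

namespace ColombeauPaper

variable {ι κ : Type*} {E : Type*} [AddCommGroup E] [Module ℝ E]
  {F : Type*} [AddCommGroup F] [Module ℝ F]

section InclAux

variable {E' : Type*} [AddCommGroup E'] [Module ℝ E'] {p : ℕ → Seminorm ℝ E'}

lemma neg_isModerate {u : ℝ → E'} (h : IsNegligible p u) : IsModerate p u := by
  intro i
  refine ⟨0, ?_⟩
  filter_upwards [h i 0, small_mem] with ε h1 h2
  simpa using h1

lemma mk_eq_mk_iff (w v : moderateGroup p) :
    (QuotientAddGroup.mk w : Colombeau p) = QuotientAddGroup.mk v ↔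
      IsNegligible p (fun ε => (w : ℝ → E') ε - (v : ℝ → E') ε) := by
  rw [QuotientAddGroup.eq]
  have hmem : (-w + v ∈ negligibleGroup p) ↔
      IsNegligible p ((-w + v : moderateGroup p) : ℝ → E') := Iff.rfl
  rw [hmem]
  constructor
  · intro h i m
    filter_upwards [h i m] with ε hε
    have h1 : ((-w + v : moderateGroup p) : ℝ → E') ε = -((w : ℝ → E') ε) + (v : ℝ → E') ε := rfl
    rw [h1] at hε
    have : (w : ℝ → E') ε - (v : ℝ → E') ε = -(-((w : ℝ → E') ε) + (v : ℝ → E') ε) := by abel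
    rw [this, map_neg_eq_map]
    exact hε
  · intro h i m
    filter_upwards [h i m] with ε hε
    have h1 : ((-w + v : moderateGroup p) : ℝ → E') ε = -((w : ℝ → E') ε) + (v : ℝ → E') ε := rfl
    rw [h1]
    have : -((w : ℝ → E') ε) + (v : ℝ → E') ε = -((w : ℝ → E') ε - (v : ℝ → E') ε) := by abel
    rw [this, map_neg_eq_map]
    exact hε

lemma semiDist_le_of_mem {n : ℕ} {u v : E'} {B : Set E'} (hv : v ∈ B) :
    semiDist p n u B ≤ ((p n (u - v) : ℝ) : EReal) := iInf₂_le v hv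

lemma exists_of_semiDist_lt {n : ℕ} {u : E'} {B : Set E'} {c : ℝ}
    (h : semiDist p n u B < ((c : ℝ) : EReal)) : ∃ v ∈ B, p n (u - v) < c := by
  simp only [semiDist, iInf_lt_iff, exists_prop] at h
  obtain ⟨v, hvB, hlt⟩ := h
  exact ⟨v, hvB, EReal.coe_lt_coe_iff.1 hlt⟩

/-- Diagonalization of a countable family of eventual properties along `𝓝[>] 0`. -/
lemma diagonal (P : ℕ → ℝ → Prop) (hP : ∀ k, ∀ᶠ ε in 𝓝[>] (0 : ℝ), P k ε) :
    ∃ K : ℝ → ℕ, (∀ k, ∀ᶠ ε in 𝓝[>] (0 : ℝ), k ≤ K ε) ∧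
      ∀ᶠ ε in 𝓝[>] (0 : ℝ), ∀ j ≤ K ε, P j ε := by
  classical
  have hδ : ∀ k, ∃ d : ℝ, 0 < d ∧ Set.Ioo (0 : ℝ) d ⊆ {ε | P k ε} := by
    intro k
    obtain ⟨d, hd, hsub⟩ := mem_nhdsGT_iff_exists_Ioo_subset.1 (hP k)
    exact ⟨d, hd, hsub⟩
  choose δ hδ0 hδP using hδ
  set η : ℕ → ℝ := fun k => Nat.rec (min (δ 0 / 2) 1)
    (fun k ih => min (δ (k + 1) / 2) (ih / 2)) k with hη
  have hη0 : ∀ k, 0 < η k := by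
    intro k
    induction k with
    | zero => exact lt_min (by linarith [hδ0 0]) one_pos
    | succ k ih => exact lt_min (by linarith [hδ0 (k + 1)]) (by linarith)
  have hηδ : ∀ k, η k < δ k := by
    intro k
    cases k with
    | zero => exact lt_of_le_of_lt (min_le_left _ _) (by linarith [hδ0 0])
    | succ k => exact lt_of_le_of_lt (min_le_left _ _) (by linarith [hδ0 (k + 1)])
  have hηsucc : ∀ k, η (k + 1) ≤ η k / 2 := fun k => min_le_right _ _
  have hanti : Antitone η := antitone_nat_of_succ_le (fun k =>
    (hηsucc k).trans (by linarith [hη0 k]))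
  have hηpow : ∀ k, η k ≤ (1 / 2 : ℝ) ^ k := by
    intro k
    induction k with
    | zero =>
      show min (δ 0 / 2) 1 ≤ _
      simpa using (min_le_right (δ 0 / 2) 1)
    | succ k ih =>
      calc η (k + 1) ≤ η k / 2 := hηsucc k
        _ ≤ (1 / 2 : ℝ) ^ k / 2 := by linarith
        _ = (1 / 2 : ℝ) ^ (k + 1) := by ring
  set K : ℝ → ℕ := fun ε => sSup {k | ε ≤ η k} with hK
  have hbdd : ∀ ε : ℝ, 0 < ε → BddAbove {k | ε ≤ η k} := by
    intro ε hε
    obtain ⟨N, hN⟩ := exists_pow_lt_of_lt_one hε (by norm_num : (1 / 2 : ℝ) < 1)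
    refine ⟨N, fun k hk => ?_⟩
    by_contra hkN
    push_neg at hkN
    have h1 : (1 / 2 : ℝ) ^ k ≤ (1 / 2 : ℝ) ^ N :=
      pow_le_pow_of_le_one (by norm_num) (by norm_num) hkN.le
    have h2 : ε ≤ (1 / 2 : ℝ) ^ k := le_trans hk (hηpow k)
    linarith
  refine ⟨K, ?_, ?_⟩
  · intro k
    filter_upwards [Ioo_mem_nhdsGT_of_mem (Set.mem_Ico.2 ⟨le_refl (0 : ℝ), hη0 k⟩)] with ε hε
    exact le_csSup (hbdd ε hε.1) (le_of_lt hε.2)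
  · filter_upwards [Ioo_mem_nhdsGT_of_mem (Set.mem_Ico.2 ⟨le_refl (0 : ℝ), hη0 0⟩)] with ε hε
    intro j hj
    have hne : {k | ε ≤ η k}.Nonempty := ⟨0, le_of_lt hε.2⟩
    have hmem : K ε ∈ {k | ε ≤ η k} := Nat.sSup_mem hne (hbdd ε hε.1)
    have h1 : ε ≤ η (K ε) := hmem
    have h2 : η (K ε) ≤ η j := hanti hj
    exact hδP j ⟨hε.1, lt_of_le_of_lt (h1.trans h2) (hηδ j)⟩

lemma incl_forward (p : ℕ → Seminorm ℝ E') (Anet Bnet : ℝ → Set E')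
    (hAb : SharplyBoundedNet p Anet) (hAne : (internalSet p Anet).Nonempty)
    (hsub : internalSet p Anet ⊆ internalSet p Bnet) :
    ∀ n m : ℕ, ∀ᶠ ε in 𝓝[>] (0 : ℝ),
      (⨆ u ∈ Anet ε, semiDist p n u (Bnet ε)) ≤ ((ε ^ m : ℝ) : EReal) := by
  classical
  intro n m
  by_contra hc
  rw [Filter.not_eventually] at hc
  obtain ⟨a, ha⟩ := hAne
  obtain ⟨aw, -, hawA⟩ := ha
  set u : ℝ → E' := fun ε =>
    if h : ∃ x ∈ Anet ε, ((ε ^ m : ℝ) : EReal) < semiDist p n x (Bnet ε)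
    then h.choose else (aw : ℝ → E') ε with hu
  have hmemA : ∀ᶠ ε in 𝓝[>] (0 : ℝ), u ε ∈ Anet ε := by
    filter_upwards [hawA] with ε hε
    rw [hu]
    by_cases h : ∃ x ∈ Anet ε, ((ε ^ m : ℝ) : EReal) < semiDist p n x (Bnet ε)
    · simp only [dif_pos h]
      exact h.choose_spec.1
    · simp only [dif_neg h]
      exact hε
  have hmod : IsModerate p u := by
    intro i
    obtain ⟨M, hM⟩ := hAb i
    refine ⟨M, ?_⟩
    filter_upwards [hM, hmemA] with ε h1 h2
    exact h1 _ h2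
  set U : moderateGroup p := ⟨u, hmod⟩ with hU
  have hUA : (QuotientAddGroup.mk U : Colombeau p) ∈ internalSet p Anet :=
    ⟨U, rfl, hmemA⟩
  obtain ⟨w, hwU, hwB⟩ := hsub hUA
  have hneg : IsNegligible p (fun ε => (w : ℝ → E') ε - u ε) := (mk_eq_mk_iff w U).1 hwU
  have hfin := (hc.and_eventually (hwB.and ((hneg n (m + 1)).and
    (Ioo_mem_nhdsGT_of_mem (Set.mem_Ico.2 ⟨le_refl (0 : ℝ), one_pos⟩))))).exists
  obtain ⟨ε, hlt, hwBε, hnegε, hε0, hε1⟩ := hfin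
  rw [not_le] at hlt
  have hcond : ∃ x ∈ Anet ε, ((ε ^ m : ℝ) : EReal) < semiDist p n x (Bnet ε) := by
    obtain ⟨x, hx⟩ := lt_iSup_iff.1 hlt
    obtain ⟨hxA, hx⟩ := lt_iSup_iff.1 hx
    exact ⟨x, hxA, hx⟩
  have huε : u ε = hcond.choose := by rw [hu]; simp only [dif_pos hcond]
  have hspec := hcond.choose_spec
  have hd : ((ε ^ m : ℝ) : EReal) < semiDist p n (u ε) (Bnet ε) := by
    rw [huε]; exact hspec.2
  have hle : semiDist p n (u ε) (Bnet ε) ≤ ((p n (u ε - (w : ℝ → E') ε) : ℝ) : EReal) :=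
    semiDist_le_of_mem hwBε
  have hps : p n (u ε - (w : ℝ → E') ε) = p n ((w : ℝ → E') ε - u ε) := map_sub_rev _ _ _
  have hpow : ε ^ (m + 1) < ε ^ m := by
    have h0 : (0 : ℝ) < ε ^ m := pow_pos hε0 m
    have : ε ^ (m + 1) = ε ^ m * ε := pow_succ ε m
    nlinarith
  have : ((p n (u ε - (w : ℝ → E') ε) : ℝ) : EReal) < ((ε ^ m : ℝ) : EReal) := by
    rw [EReal.coe_lt_coe_iff, hps]
    exact lt_of_le_of_lt hnegε hpow
  exact absurd (lt_of_le_of_lt (hd.le.trans hle) this) (lt_irrefl _)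

lemma incl_backward (p : ℕ → Seminorm ℝ E') (hp : Monotone p) (Anet Bnet : ℝ → Set E')
    (H : ∀ n m : ℕ, ∀ᶠ ε in 𝓝[>] (0 : ℝ),
      (⨆ u ∈ Anet ε, semiDist p n u (Bnet ε)) ≤ ((ε ^ m : ℝ) : EReal)) :
    internalSet p Anet ⊆ internalSet p Bnet := by
  classical
  intro u hu
  obtain ⟨w, hwu, hwA⟩ := hu
  have hP : ∀ k, ∀ᶠ ε in 𝓝[>] (0 : ℝ), (0 < ε ∧ ε < 1) ∧
      semiDist p k ((w : ℝ → E') ε) (Bnet ε) ≤ ((ε ^ (k + 1) : ℝ) : EReal) := by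
    intro k
    filter_upwards [hwA, H k (k + 1),
      Ioo_mem_nhdsGT_of_mem (Set.mem_Ico.2 ⟨le_refl (0 : ℝ), one_pos⟩)] with ε h1 h2 h3
    refine ⟨⟨h3.1, h3.2⟩, le_trans ?_ h2⟩
    exact le_iSup₂ (f := fun x (_ : x ∈ Anet ε) => semiDist p k x (Bnet ε)) _ h1
  obtain ⟨K, hK, hgood⟩ := diagonal _ hP
  set v : ℝ → E' := fun ε =>
    if h : ∃ y ∈ Bnet ε, p (K ε) ((w : ℝ → E') ε - y) < ε ^ (K ε)
    then h.choose else (w : ℝ → E') ε with hv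
  have hkey : ∀ᶠ ε in 𝓝[>] (0 : ℝ),
      v ε ∈ Bnet ε ∧ p (K ε) ((w : ℝ → E') ε - v ε) < ε ^ (K ε) ∧ 0 < ε ∧ ε < 1 := by
    filter_upwards [hgood] with ε hg
    obtain ⟨⟨hε0, hε1⟩, hd⟩ := hg (K ε) (le_refl _)
    have hpow : ε ^ (K ε + 1) < ε ^ (K ε) := by
      have h0 : (0 : ℝ) < ε ^ (K ε) := pow_pos hε0 _
      have : ε ^ (K ε + 1) = ε ^ (K ε) * ε := pow_succ ε _
      nlinarith
    have hlt : semiDist p (K ε) ((w : ℝ → E') ε) (Bnet ε) < ((ε ^ (K ε) : ℝ) : EReal) :=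
      lt_of_le_of_lt hd (EReal.coe_lt_coe_iff.2 hpow)
    have hcond : ∃ y ∈ Bnet ε, p (K ε) ((w : ℝ → E') ε - y) < ε ^ (K ε) :=
      exists_of_semiDist_lt hlt
    have hvε : v ε = hcond.choose := by rw [hv]; simp only [dif_pos hcond]
    have hspec := hcond.choose_spec
    rw [hvε]
    exact ⟨hspec.1, hspec.2, hε0, hε1⟩
  have hneg : IsNegligible p (fun ε => (w : ℝ → E') ε - v ε) := by
    intro i m'
    filter_upwards [hkey, hK i, hK m'] with ε hk hi hm
    obtain ⟨-, h2, hε0, hε1⟩ := hk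
    calc p i ((w : ℝ → E') ε - v ε) ≤ p (K ε) ((w : ℝ → E') ε - v ε) := hp hi _
      _ ≤ ε ^ (K ε) := h2.le
      _ ≤ ε ^ m' := pow_le_pow_of_le_one hε0.le hε1.le hm
  set Z : moderateGroup p := ⟨fun ε => (w : ℝ → E') ε - v ε, neg_isModerate hneg⟩ with hZ
  refine ⟨w - Z, ?_, ?_⟩
  · have h1 : (QuotientAddGroup.mk (w - Z) : Colombeau p) = QuotientAddGroup.mk w := by
      rw [mk_eq_mk_iff]
      intro i m'
      filter_upwards [hneg i m'] with ε hε
      have h2 : ((w - Z : moderateGroup p) : ℝ → E') ε - (w : ℝ → E') ε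
          = -((w : ℝ → E') ε - v ε) := by
        have : ((w - Z : moderateGroup p) : ℝ → E') ε
            = (w : ℝ → E') ε - ((w : ℝ → E') ε - v ε) := rfl
        rw [this]; abel
      rw [h2, map_neg_eq_map]
      exact hε
    exact h1.trans hwu
  · filter_upwards [hkey] with ε hk
    have : ((w - Z : moderateGroup p) : ℝ → E') ε
        = (w : ℝ → E') ε - ((w : ℝ → E') ε - v ε) := rfl
    rw [this, sub_sub_cancel]
    exact hk.1

lemma incl_part2 (p : ℕ → Seminorm ℝ E') (hp : Monotone p) (Anet Bnet : ℝ → Set E')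
    (hAb : SharplyBoundedNet p Anet) (hAne : (internalSet p Anet).Nonempty)
    (H : ∀ n m : ℕ, ∀ᶠ ε in 𝓝[>] (0 : ℝ),
      (⨆ u ∈ Anet ε, semiDist p n u (Bnet ε)) ≤ ((ε ^ m : ℝ) : EReal)) :
    ∃ Atilde : ℝ → Set E', SharplyBoundedNet p Atilde ∧
      internalSet p Atilde = internalSet p Anet ∧
      ∀ ε ∈ Set.Ioo (0 : ℝ) 1, Atilde ε ⊆ Bnet ε := by
  classical
  choose M hM using hAb
  have hP : ∀ k, ∀ᶠ ε in 𝓝[>] (0 : ℝ), (0 < ε ∧ ε < 1) ∧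
      (⨆ u ∈ Anet ε, semiDist p k u (Bnet ε)) ≤ ((ε ^ (k + 1) : ℝ) : EReal) ∧
      ∀ w ∈ Anet ε, p k w ≤ ε ^ (-(M k : ℤ)) := by
    intro k
    filter_upwards [H k (k + 1), hM k,
      Ioo_mem_nhdsGT_of_mem (Set.mem_Ico.2 ⟨le_refl (0 : ℝ), one_pos⟩)] with ε h1 h2 h3
    exact ⟨⟨h3.1, h3.2⟩, h1, h2⟩
  obtain ⟨K, hK, hgood⟩ := diagonal _ hP
  obtain ⟨δ, hδ0, hδsub⟩ := mem_nhdsGT_iff_exists_Ioo_subset.1 hgood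
  have hδmem : Set.Ioo (0 : ℝ) δ ∈ 𝓝[>] (0 : ℝ) :=
    Ioo_mem_nhdsGT_of_mem (Set.mem_Ico.2 ⟨le_refl (0 : ℝ), hδ0⟩)
  set Atilde : ℝ → Set E' := fun ε =>
    if 0 < ε ∧ ε < δ then
      {v | v ∈ Bnet ε ∧ ∃ x ∈ Anet ε, p (K ε) (x - v) ≤ ε ^ (K ε)}
    else ∅ with hAt
  have hmemAt : ∀ ε, 0 < ε → ε < δ → ∀ v, v ∈ Atilde ε ↔
      (v ∈ Bnet ε ∧ ∃ x ∈ Anet ε, p (K ε) (x - v) ≤ ε ^ (K ε)) := by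
    intro ε h1 h2 v
    rw [hAt]
    simp only [if_pos (⟨h1, h2⟩ : 0 < ε ∧ ε < δ)]
    exact Iff.rfl
  have hempty : ∀ ε, ¬ (0 < ε ∧ ε < δ) → Atilde ε = ∅ := by
    intro ε h
    rw [hAt]
    simp only [if_neg h]
  obtain ⟨a, ha⟩ := hAne
  obtain ⟨aw, -, hawA⟩ := ha
  refine ⟨Atilde, ?_, ?_, ?_⟩
  · -- sharply bounded
    intro i
    refine ⟨M i + 1, ?_⟩
    filter_upwards [hK i, hδmem, small_mem] with ε hi hεδ hhalf
    intro v hv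
    obtain ⟨hε0, hεδ'⟩ := hεδ
    have hg := hδsub ⟨hε0, hεδ'⟩
    obtain ⟨⟨-, hε1⟩, -, hbound⟩ := hg i hi
    obtain ⟨hvB, x, hxA, hxv⟩ := (hmemAt ε hε0 hεδ' v).1 hv
    have h1 : p i v ≤ p i x + p i (x - v) := by
      have : v = x - (x - v) := by abel
      calc p i v = p i (x - (x - v)) := by rw [← this]
        _ ≤ p i x + p i (x - v) := map_sub_le_add _ _ _
    have h2 : p i (x - v) ≤ ε ^ (K ε) := le_trans (hp hi _) hxv
    have h3 : ε ^ (K ε) ≤ 1 := pow_le_one₀ hε0.le hε1.le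
    have h4 : p i x ≤ ε ^ (-(M i : ℤ)) := hbound x hxA
    have e1 : ε ^ (-((M i : ℕ) : ℤ)) = (ε ^ (M i))⁻¹ := by rw [zpow_neg, zpow_natCast]
    have e2 : ε ^ (-((M i + 1 : ℕ) : ℤ)) = (ε ^ (M i))⁻¹ * ε⁻¹ := by
      rw [zpow_neg, zpow_natCast, pow_succ, mul_inv]
    have hinv2 : (2 : ℝ) ≤ ε⁻¹ := by nlinarith [mul_inv_cancel₀ (ne_of_gt hε0), hhalf.2]
    have hone : (1 : ℝ) ≤ (ε ^ (M i))⁻¹ :=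
      (one_le_inv₀ (pow_pos hε0 _)).2 (pow_le_one₀ hε0.le hε1.le)
    rw [e2]
    rw [e1] at h4
    nlinarith [pow_pos hε0 (M i)]
  · -- internalSet equality
    apply Set.Subset.antisymm
    · -- Atilde ⊆ Anet
      intro c hc
      obtain ⟨wv, hwvc, hwvmem⟩ := hc
      set x : ℝ → E' := fun ε =>
        if h : ∃ y ∈ Anet ε, p (K ε) (y - (wv : ℝ → E') ε) ≤ ε ^ (K ε)
        then h.choose else (aw : ℝ → E') ε with hx
      have hkey : ∀ᶠ ε in 𝓝[>] (0 : ℝ), x ε ∈ Anet ε ∧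
          p (K ε) (x ε - (wv : ℝ → E') ε) ≤ ε ^ (K ε) ∧ 0 < ε ∧ ε < 1 := by
        filter_upwards [hwvmem, hδmem] with ε hwvε hεδ
        have hg := hδsub hεδ
        obtain ⟨⟨hε0, hε1⟩, -, -⟩ := hg 0 (Nat.zero_le _)
        obtain ⟨-, hcond⟩ := (hmemAt ε hεδ.1 hεδ.2 _).1 hwvε
        have hxε : x ε = hcond.choose := by rw [hx]; simp only [dif_pos hcond]
        have hspec := hcond.choose_spec
        rw [hxε]
        exact ⟨hspec.1, hspec.2, hε0, hε1⟩
      have hneg : IsNegligible p (fun ε => x ε - (wv : ℝ → E') ε) := by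
        intro i m'
        filter_upwards [hkey, hK i, hK m'] with ε hk hi hm
        obtain ⟨-, h2, hε0, hε1⟩ := hk
        calc p i (x ε - (wv : ℝ → E') ε) ≤ p (K ε) (x ε - (wv : ℝ → E') ε) := hp hi _
          _ ≤ ε ^ (K ε) := h2
          _ ≤ ε ^ m' := pow_le_pow_of_le_one hε0.le hε1.le hm
      set Z : moderateGroup p := ⟨fun ε => x ε - (wv : ℝ → E') ε, neg_isModerate hneg⟩
      refine ⟨wv + Z, ?_, ?_⟩
      · have h1 : (QuotientAddGroup.mk (wv + Z) : Colombeau p) = QuotientAddGroup.mk wv := by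
          rw [mk_eq_mk_iff]
          intro i m'
          filter_upwards [hneg i m'] with ε hε
          have h2 : ((wv + Z : moderateGroup p) : ℝ → E') ε - (wv : ℝ → E') ε
              = x ε - (wv : ℝ → E') ε := by
            have : ((wv + Z : moderateGroup p) : ℝ → E') ε
                = (wv : ℝ → E') ε + (x ε - (wv : ℝ → E') ε) := rfl
            rw [this]; abel
          rw [h2]
          exact hε
        exact h1.trans hwvc
      · filter_upwards [hkey] with ε hk
        have h2 : ((wv + Z : moderateGroup p) : ℝ → E') ε = x ε := by
          have : ((wv + Z : moderateGroup p) : ℝ → E') ε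
              = (wv : ℝ → E') ε + (x ε - (wv : ℝ → E') ε) := rfl
          rw [this]; abel
        rw [h2]
        exact hk.1
    · -- Anet ⊆ Atilde
      intro c hc
      obtain ⟨w, hwc, hwA⟩ := hc
      set v : ℝ → E' := fun ε =>
        if h : ∃ y ∈ Bnet ε, p (K ε) ((w : ℝ → E') ε - y) < ε ^ (K ε)
        then h.choose else (w : ℝ → E') ε with hv
      have hkey : ∀ᶠ ε in 𝓝[>] (0 : ℝ), v ε ∈ Atilde ε ∧
          p (K ε) ((w : ℝ → E') ε - v ε) < ε ^ (K ε) ∧ 0 < ε ∧ ε < 1 := by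
        filter_upwards [hwA, hδmem] with ε hwε hεδ
        have hg := hδsub hεδ
        obtain ⟨⟨hε0, hε1⟩, hd, -⟩ := hg (K ε) (le_refl _)
        have hpow : ε ^ (K ε + 1) < ε ^ (K ε) := by
          have h0 : (0 : ℝ) < ε ^ (K ε) := pow_pos hε0 _
          have : ε ^ (K ε + 1) = ε ^ (K ε) * ε := pow_succ ε _
          nlinarith
        have hdw : semiDist p (K ε) ((w : ℝ → E') ε) (Bnet ε) < ((ε ^ (K ε) : ℝ) : EReal) := by
          refine lt_of_le_of_lt (le_trans ?_ hd) (EReal.coe_lt_coe_iff.2 hpow)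
          exact le_iSup₂ (f := fun u (_ : u ∈ Anet ε) => semiDist p (K ε) u (Bnet ε)) _ hwε
        have hcond : ∃ y ∈ Bnet ε, p (K ε) ((w : ℝ → E') ε - y) < ε ^ (K ε) :=
          exists_of_semiDist_lt hdw
        have hvε : v ε = hcond.choose := by rw [hv]; simp only [dif_pos hcond]
        have hspec := hcond.choose_spec
        rw [hvε]
        refine ⟨(hmemAt ε hεδ.1 hεδ.2 _).2 ⟨hspec.1, (w : ℝ → E') ε, hwε, hspec.2.le⟩,
          hspec.2, hε0, hε1⟩
      have hneg : IsNegligible p (fun ε => (w : ℝ → E') ε - v ε) := by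
        intro i m'
        filter_upwards [hkey, hK i, hK m'] with ε hk hi hm
        obtain ⟨-, h2, hε0, hε1⟩ := hk
        calc p i ((w : ℝ → E') ε - v ε) ≤ p (K ε) ((w : ℝ → E') ε - v ε) := hp hi _
          _ ≤ ε ^ (K ε) := h2.le
          _ ≤ ε ^ m' := pow_le_pow_of_le_one hε0.le hε1.le hm
      set Z : moderateGroup p := ⟨fun ε => (w : ℝ → E') ε - v ε, neg_isModerate hneg⟩
      refine ⟨w - Z, ?_, ?_⟩
      · have h1 : (QuotientAddGroup.mk (w - Z) : Colombeau p) = QuotientAddGroup.mk w := by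
          rw [mk_eq_mk_iff]
          intro i m'
          filter_upwards [hneg i m'] with ε hε
          have h2 : ((w - Z : moderateGroup p) : ℝ → E') ε - (w : ℝ → E') ε
              = -((w : ℝ → E') ε - v ε) := by
            have : ((w - Z : moderateGroup p) : ℝ → E') ε
                = (w : ℝ → E') ε - ((w : ℝ → E') ε - v ε) := rfl
            rw [this]; abel
          rw [h2, map_neg_eq_map]
          exact hε
        exact h1.trans hwc
      · filter_upwards [hkey] with ε hk
        have h2 : ((w - Z : moderateGroup p) : ℝ → E') ε = v ε := by
          have : ((w - Z : moderateGroup p) : ℝ → E') ε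
              = (w : ℝ → E') ε - ((w : ℝ → E') ε - v ε) := rfl
          rw [this]; abel
        rw [h2]
        exact hk.1
  · -- Atilde ε ⊆ Bnet ε on (0,1)
    intro ε hε v hv
    by_cases h : 0 < ε ∧ ε < δ
    · exact ((hmemAt ε h.1 h.2 v).1 hv).1
    · rw [hempty ε h] at hv
      exact absurd hv (Set.notMem_empty v)

end InclAux


/-- **Inclusions of internal sets.** With `(p_n)` increasing, `A` internal,
non-empty, with sharply bounded representative `(A_ε)`, and `B = [(B_ε)]` internal:
`A ⊆ B` iff the nets `(sup_{u ∈ A_ε} d_n(u, B_ε))_ε` are negligible for all `n`; moreover,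
if `A ⊆ B` there is a sharply bounded representative `(Ã_ε)` of `A` with `Ã_ε ⊆ B_ε`. -/
theorem inclusion_characterization
    {E : Type*} [AddCommGroup E] [Module ℝ E]
    (p : ℕ → Seminorm ℝ E) (hp : Monotone p)
    (Anet Bnet : ℝ → Set E) (hAb : SharplyBoundedNet p Anet)
    (hAne : (internalSet p Anet).Nonempty) :
    (internalSet p Anet ⊆ internalSet p Bnet ↔
      ∀ n m : ℕ, ∀ᶠ ε in 𝓝[>] (0 : ℝ),
        (⨆ u ∈ Anet ε, semiDist p n u (Bnet ε)) ≤ ((ε ^ m : ℝ) : EReal)) ∧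
    (internalSet p Anet ⊆ internalSet p Bnet →
      ∃ Atilde : ℝ → Set E, SharplyBoundedNet p Atilde ∧
        internalSet p Atilde = internalSet p Anet ∧
        ∀ ε ∈ Set.Ioo (0 : ℝ) 1, Atilde ε ⊆ Bnet ε) := by
  exact ⟨⟨fun h => incl_forward p Anet Bnet hAb hAne h,
      fun h => incl_backward p hp Anet Bnet h⟩,
    fun h => incl_part2 p hp Anet Bnet hAb hAne (incl_forward p Anet Bnet hAb hAne h)⟩

end ColombeauPaper
end
end

section
/- Suppose the topology of E is generated by an increasing sequence of seminorms (p_n)_{n∈ℕ}. Let A = [(A_ε)] and B = [(B_ε)] be internal subsets of G_E. Then A ∩ B = ⋂_{m∈ℕ} [({u∈E : d_m(u,A_ε) ≤ ε^m} ∩ {u∈E : d_m(u,B_ε) ≤ ε^m})_ε], and the right-hand side does not depend on the chosen representative nets (A_ε) of A and (B_ε) of B. -/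
open Filter Topology Asymptotics

noncomputable section

namespace ColombeauPaper

variable {ι κ : Type*} {E : Type*} [AddCommGroup E] [Module ℝ E]
  {F : Type*} [AddCommGroup F] [Module ℝ F]

lemma neg_isModerate_of_isNegligible {E : Type*} [AddCommGroup E] [Module ℝ E]
    (p : ℕ → Seminorm ℝ E) {u : ℝ → E} (h : IsNegligible p u) : IsModerate p u := by
  intro i
  refine ⟨0, ?_⟩
  filter_upwards [h i 0] with ε hε
  simpa using hε

lemma semiDist_exists_of_le {E : Type*} [AddCommGroup E] [Module ℝ E]
    (p : ℕ → Seminorm ℝ E) (m : ℕ) (u : E) (A : Set E) {ε : ℝ} (hε : 0 < ε)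
    (h : semiDist p m u A ≤ ((ε ^ m : ℝ) : EReal)) :
    ∃ a ∈ A, p m (u - a) ≤ 2 * ε ^ m := by
  have hlt : semiDist p m u A < ((2 * ε ^ m : ℝ) : EReal) := by
    refine h.trans_lt ?_
    rw [EReal.coe_lt_coe_iff]
    nlinarith [pow_pos hε m]
  rw [semiDist, iInf_lt_iff] at hlt
  obtain ⟨a, ha⟩ := hlt
  rw [iInf_lt_iff] at ha
  obtain ⟨haA, ha⟩ := ha
  exact ⟨a, haA, le_of_lt (EReal.coe_lt_coe_iff.mp ha)⟩

open scoped Classical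

/-- Key lemma: if for every `m` the class `u` has a representative whose values are within
`ε^m` (w.r.t. `p m`) of `Anet ε` for small `ε`, then `u ∈ internalSet p Anet`. -/
lemma mem_internalSet_of_forall_dist {E : Type*} [AddCommGroup E] [Module ℝ E]
    (p : ℕ → Seminorm ℝ E) (hp : Monotone p) (Anet : ℝ → Set E) (u : Colombeau p)
    (h : ∀ m : ℕ, ∃ w : moderateGroup p, (QuotientAddGroup.mk w : Colombeau p) = u ∧
      ∀ᶠ ε in 𝓝[>] (0 : ℝ), semiDist p m ((w : ℝ → E) ε) (Anet ε) ≤ ((ε ^ m : ℝ) : EReal)) :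
    u ∈ internalSet p Anet := by
  classical
  obtain ⟨w₀, hw₀, -⟩ := h 0
  -- Step 1: for each m, eventually there is a good point of `Anet ε` near `w₀ ε`.
  have hQ : ∀ m : ℕ, ∀ᶠ ε in 𝓝[>] (0 : ℝ),
      ∃ a ∈ Anet ε, p m ((w₀ : ℝ → E) ε - a) ≤ 3 * ε ^ m := by
    intro m
    obtain ⟨w, hw, hd⟩ := h m
    have hneg : IsNegligible p ((-w₀ + w : moderateGroup p) : ℝ → E) :=
      (QuotientAddGroup.eq).mp (hw₀.trans hw.symm)
    filter_upwards [hd, hneg m m, self_mem_nhdsWithin] with ε h1 h2 h3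
    have hε : (0 : ℝ) < ε := h3
    obtain ⟨a, haA, ha⟩ := semiDist_exists_of_le p m _ _ hε h1
    refine ⟨a, haA, ?_⟩
    have hco : ((-w₀ + w : moderateGroup p) : ℝ → E) ε
        = -((w₀ : ℝ → E) ε) + (w : ℝ → E) ε := rfl
    rw [hco] at h2
    have h2' : p m ((w₀ : ℝ → E) ε - (w : ℝ → E) ε) ≤ ε ^ m := by
      rw [show (w₀ : ℝ → E) ε - (w : ℝ → E) ε = -(-((w₀ : ℝ → E) ε) + (w : ℝ → E) ε) by abel]
      rw [map_neg_eq_map]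
      exact h2
    have tri : p m ((w₀ : ℝ → E) ε - a)
        ≤ p m ((w₀ : ℝ → E) ε - (w : ℝ → E) ε) + p m ((w : ℝ → E) ε - a) := by
      have : (w₀ : ℝ → E) ε - a
          = ((w₀ : ℝ → E) ε - (w : ℝ → E) ε) + ((w : ℝ → E) ε - a) := by abel
      rw [this]
      exact map_add_le_add _ _ _
    linarith
  -- Step 2: extract radii δ m.
  have hδex : ∀ m : ℕ, ∃ δ : ℝ, 0 < δ ∧ ∀ ε ∈ Set.Ioc (0 : ℝ) δ,
      ∃ a ∈ Anet ε, p m ((w₀ : ℝ → E) ε - a) ≤ 3 * ε ^ m := by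
    intro m
    obtain ⟨δ, hδ, hsub⟩ := mem_nhdsGT_iff_exists_Ioc_subset.mp (hQ m)
    exact ⟨δ, hδ, fun ε hε => hsub hε⟩
  choose δ hδ0 hδ using hδex
  -- Step 3: the decreasing sequence η.
  let η : ℕ → ℝ := fun m => Nat.rec (motive := fun _ => ℝ) (δ 0) (fun m ih => min (δ (m + 1)) (ih / 2)) m
  have hη0 : η 0 = δ 0 := rfl
  have hηsucc : ∀ m, η (m + 1) = min (δ (m + 1)) (η m / 2) := fun m => rfl
  have hηpos : ∀ m, 0 < η m := by
    intro m
    induction m with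
    | zero => exact hδ0 0
    | succ m ih => rw [hηsucc]; exact lt_min (hδ0 _) (by linarith)
  have hηδ : ∀ m, η m ≤ δ m := by
    intro m
    cases m with
    | zero => exact le_of_eq hη0
    | succ m => rw [hηsucc]; exact min_le_left _ _
  have hηhalf : ∀ m, η (m + 1) ≤ η m / 2 := fun m => by rw [hηsucc]; exact min_le_right _ _
  have hηanti : Antitone η := by
    refine antitone_nat_of_succ_le fun m => ?_
    have := hηhalf m
    have := hηpos m
    linarith
  have hηbound : ∀ m, η m ≤ η 0 * (1 / 2) ^ m := by
    intro m
    induction m with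
    | zero => simp
    | succ m ih =>
      have h1 := hηhalf m
      have : (1 / 2 : ℝ) ^ (m + 1) = (1 / 2) ^ m * (1 / 2) := pow_succ _ _
      rw [this]
      calc η (m + 1) ≤ η m / 2 := h1
        _ ≤ (η 0 * (1 / 2) ^ m) / 2 := by linarith
        _ = η 0 * ((1 / 2) ^ m * (1 / 2)) := by ring
  have hex : ∀ ε : ℝ, 0 < ε → ∃ m, η m < ε := by
    intro ε hε
    obtain ⟨n, hn⟩ := exists_pow_lt_of_lt_one (x := ε / η 0)
      (div_pos hε (hηpos 0)) (by norm_num : (1 / 2 : ℝ) < 1)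
    refine ⟨n, (hηbound n).trans_lt ?_⟩
    have h0 := hηpos 0
    calc η 0 * (1 / 2) ^ n < η 0 * (ε / η 0) := by
          exact mul_lt_mul_of_pos_left hn h0
      _ = ε := by field_simp
  -- the index function
  let N : ℝ → ℕ := fun ε => sInf {m | η m < ε} - 1
  have hsInf_pos : ∀ ε : ℝ, 0 < ε → ε ≤ η 0 → 1 ≤ sInf {m | η m < ε} := by
    intro ε hε hε0
    have hx : Set.Nonempty {m | η m < ε} := hex ε hε
    have hmem : η (sInf {m | η m < ε}) < ε := Nat.sInf_mem hx
    rcases Nat.eq_zero_or_pos (sInf {m | η m < ε}) with h | h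
    · rw [h] at hmem; exact absurd hmem (not_lt.mpr hε0)
    · exact h
  have hNle : ∀ ε : ℝ, 0 < ε → ε ≤ η 0 → ε ≤ η (N ε) := by
    intro ε hε hε0
    have h1 := hsInf_pos ε hε hε0
    have hmin : N ε ∉ {m | η m < ε} := Nat.notMem_of_lt_sInf (by
      show sInf {m | η m < ε} - 1 < sInf {m | η m < ε}
      omega)
    exact not_lt.mp hmin
  have hNge : ∀ ε : ℝ, 0 < ε → ∀ M, ε ≤ η M → M ≤ N ε := by
    intro ε hε M hM
    have hx : Set.Nonempty {m | η m < ε} := hex ε hε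
    have hmem : η (sInf {m | η m < ε}) < ε := Nat.sInf_mem hx
    have hgt : M < sInf {m | η m < ε} := by
      by_contra hcon
      have hle : sInf {m | η m < ε} ≤ M := not_lt.mp hcon
      have : ε ≤ η (sInf {m | η m < ε}) := hM.trans (hηanti hle)
      exact absurd hmem (not_lt.mpr this)
    show M ≤ sInf {m | η m < ε} - 1
    omega
  -- the new representative
  let w : ℝ → E := fun ε =>
    if hc : ∃ a ∈ Anet ε, p (N ε) ((w₀ : ℝ → E) ε - a) ≤ 3 * ε ^ (N ε) then hc.choose
    else (w₀ : ℝ → E) ε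
  have hwspec : ∀ ε : ℝ, 0 < ε → ε ≤ η 0 →
      w ε ∈ Anet ε ∧ p (N ε) ((w₀ : ℝ → E) ε - w ε) ≤ 3 * ε ^ (N ε) := by
    intro ε hε hε0
    have h1 : ε ≤ η (N ε) := hNle ε hε hε0
    have h2 : ε ≤ δ (N ε) := h1.trans (hηδ _)
    have hc : ∃ a ∈ Anet ε, p (N ε) ((w₀ : ℝ → E) ε - a) ≤ 3 * ε ^ (N ε) :=
      hδ (N ε) ε ⟨hε, h2⟩
    have hw : w ε = hc.choose := by simp only [w, dif_pos hc]
    rw [hw]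
    exact hc.choose_spec
  -- the difference is negligible
  have hdiff : IsNegligible p (fun ε => (w₀ : ℝ → E) ε - w ε) := by
    intro n k
    set M : ℕ := max n k + 1 with hM
    have hmem : Set.Ioc (0 : ℝ) (min (η M) (1 / 3)) ∈ 𝓝[>] (0 : ℝ) :=
      Ioc_mem_nhdsGT_of_mem ⟨le_refl 0, lt_min (hηpos M) (by norm_num)⟩
    filter_upwards [hmem] with ε hεm
    obtain ⟨hε, hεle⟩ := hεm
    have hεη : ε ≤ η M := hεle.trans (min_le_left _ _)
    have hε3 : ε ≤ 1 / 3 := hεle.trans (min_le_right _ _)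
    have hε0 : ε ≤ η 0 := hεη.trans (hηanti (Nat.zero_le M))
    have hN : M ≤ N ε := hNge ε hε M hεη
    obtain ⟨-, hb⟩ := hwspec ε hε hε0
    have hmono : p n ((w₀ : ℝ → E) ε - w ε) ≤ p (N ε) ((w₀ : ℝ → E) ε - w ε) :=
      hp (le_trans (le_trans (le_max_left n k) (Nat.le_succ _)) hN) _
    have hε1 : ε ≤ 1 := hε3.trans (by norm_num)
    have hpow1 : ε ^ (N ε) ≤ ε ^ M := pow_le_pow_of_le_one hε.le hε1 hN
    have hpow2 : ε ^ M ≤ ε ^ (k + 1) := pow_le_pow_of_le_one hε.le hε1 (by omega)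
    have hpow3 : (3 : ℝ) * ε ^ (k + 1) ≤ ε ^ k := by
      have : ε ^ (k + 1) = ε ^ k * ε := pow_succ _ _
      rw [this]
      nlinarith [pow_nonneg hε.le k]
    calc p n ((w₀ : ℝ → E) ε - w ε) ≤ p (N ε) ((w₀ : ℝ → E) ε - w ε) := hmono
      _ ≤ 3 * ε ^ (N ε) := hb
      _ ≤ 3 * ε ^ (k + 1) := by nlinarith
      _ ≤ ε ^ k := hpow3
  -- w is moderate
  have hwmod : IsModerate p w := by
    intro i
    obtain ⟨M, hM⟩ := w₀.2 i
    refine ⟨M + 1, ?_⟩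
    filter_upwards [hM, hdiff i 0, small_mem] with ε h1 h2 h3
    obtain ⟨hε, hε2⟩ := h3
    have tri : p i (w ε) ≤ p i ((w₀ : ℝ → E) ε) + p i ((w₀ : ℝ → E) ε - w ε) := by
      have heq : w ε = (w₀ : ℝ → E) ε + -((w₀ : ℝ → E) ε - w ε) := by abel
      have h' := map_add_le_add (p i) ((w₀ : ℝ → E) ε) (-((w₀ : ℝ → E) ε - w ε))
      rw [map_neg_eq_map] at h'
      exact le_trans (le_of_eq (congrArg (p i) heq)) h'
    have hinv : (2 : ℝ) ≤ ε⁻¹ := by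
      rw [le_inv_comm₀ (by norm_num) hε]
      linarith
    have hbig : ε ^ (-(M : ℤ)) + 1 ≤ ε ^ (-((M + 1 : ℕ) : ℤ)) := by
      rw [zpow_neg_natCast_eq, zpow_neg_natCast_eq, zpow_natCast, zpow_natCast]
      have h1inv : (1 : ℝ) ≤ ε⁻¹ := by linarith
      have hone : (1 : ℝ) ≤ ε⁻¹ ^ M := one_le_pow₀ h1inv
      have hps : ε⁻¹ ^ (M + 1) = ε⁻¹ ^ M * ε⁻¹ := pow_succ _ _
      rw [hps]
      nlinarith
    have h2' : p i ((w₀ : ℝ → E) ε - w ε) ≤ 1 := by simpa using h2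
    push_cast at hbig ⊢
    linarith
  refine ⟨⟨w, hwmod⟩, ?_, ?_⟩
  · rw [← hw₀]
    symm
    rw [QuotientAddGroup.eq]
    show IsNegligible p ((-w₀ + ⟨w, hwmod⟩ : moderateGroup p) : ℝ → E)
    intro i m
    filter_upwards [hdiff i m] with ε hε
    have hco : ((-w₀ + (⟨w, hwmod⟩ : moderateGroup p) : moderateGroup p) : ℝ → E) ε
        = -((w₀ : ℝ → E) ε - w ε) := by
      show -((w₀ : ℝ → E) ε) + w ε = _
      abel
    rw [hco, map_neg_eq_map]
    exact hε
  · have hmem : Set.Ioc (0 : ℝ) (η 0) ∈ 𝓝[>] (0 : ℝ) :=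
      Ioc_mem_nhdsGT_of_mem ⟨le_refl 0, hηpos 0⟩
    filter_upwards [hmem] with ε hε
    exact (hwspec ε hε.1 hε.2).1

/-- **Intersections of internal sets.** With `(p_n)` increasing and
`A = [(A_ε)]`, `B = [(B_ε)]` internal,
`A ∩ B = ⋂_m [({u : d_m(u, A_ε) ≤ ε^m} ∩ {u : d_m(u, B_ε) ≤ ε^m})_ε]`
(for all choices of representative nets, hence independent of them). -/
theorem intersection_characterization
    {E : Type*} [AddCommGroup E] [Module ℝ E]
    (p : ℕ → Seminorm ℝ E) (hp : Monotone p)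
    (Anet Bnet : ℝ → Set E) :
    internalSet p Anet ∩ internalSet p Bnet =
      ⋂ m : ℕ, internalSet p (fun ε =>
        {u : E | semiDist p m u (Anet ε) ≤ ((ε ^ m : ℝ) : EReal)} ∩
        {u : E | semiDist p m u (Bnet ε) ≤ ((ε ^ m : ℝ) : EReal)}) := by
  apply Set.Subset.antisymm
  · rintro u ⟨⟨wa, hwa, hA⟩, ⟨wb, hwb, hB⟩⟩
    rw [Set.mem_iInter]
    intro m
    refine ⟨wa, hwa, ?_⟩
    have hneg : IsNegligible p ((-wa + wb : moderateGroup p) : ℝ → E) :=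
      (QuotientAddGroup.eq).mp (hwa.trans hwb.symm)
    filter_upwards [hA, hB, hneg m m, self_mem_nhdsWithin] with ε h1 h2 h3 h4
    have hε : (0 : ℝ) < ε := h4
    have hεm : (0 : ℝ) ≤ ε ^ m := by positivity
    constructor
    · show semiDist p m ((wa : ℝ → E) ε) (Anet ε) ≤ ((ε ^ m : ℝ) : EReal)
      calc semiDist p m ((wa : ℝ → E) ε) (Anet ε)
          ≤ ((p m ((wa : ℝ → E) ε - (wa : ℝ → E) ε) : ℝ) : EReal) := iInf₂_le _ h1
        _ = ((0 : ℝ) : EReal) := by rw [sub_self, map_zero]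
        _ ≤ ((ε ^ m : ℝ) : EReal) := EReal.coe_le_coe_iff.mpr hεm
    · show semiDist p m ((wa : ℝ → E) ε) (Bnet ε) ≤ ((ε ^ m : ℝ) : EReal)
      have hco : ((-wa + wb : moderateGroup p) : ℝ → E) ε
          = -((wa : ℝ → E) ε) + (wb : ℝ → E) ε := rfl
      rw [hco] at h3
      have h3' : p m ((wa : ℝ → E) ε - (wb : ℝ → E) ε) ≤ ε ^ m := by
        rw [show (wa : ℝ → E) ε - (wb : ℝ → E) ε
            = -(-((wa : ℝ → E) ε) + (wb : ℝ → E) ε) by abel, map_neg_eq_map]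
        exact h3
      calc semiDist p m ((wa : ℝ → E) ε) (Bnet ε)
          ≤ ((p m ((wa : ℝ → E) ε - (wb : ℝ → E) ε) : ℝ) : EReal) := iInf₂_le _ h2
        _ ≤ ((ε ^ m : ℝ) : EReal) := EReal.coe_le_coe_iff.mpr h3'
  · intro u hu
    rw [Set.mem_iInter] at hu
    constructor
    · refine mem_internalSet_of_forall_dist p hp Anet u fun m => ?_
      obtain ⟨w, hw, hev⟩ := hu m
      exact ⟨w, hw, hev.mono fun ε hε => hε.1⟩
    · refine mem_internalSet_of_forall_dist p hp Bnet u fun m => ?_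
      obtain ⟨w, hw, hev⟩ := hu m
      exact ⟨w, hw, hev.mono fun ε hε => hε.2⟩

end ColombeauPaper
end
end

section
/- Suppose the topology of E is generated by an increasing sequence of seminorms (p_n)_{n∈ℕ}. Let A and B be internal subsets of G_E. If A ∩ B is internal and has a sharply bounded representative net, then there exist representative nets (Ã_ε) of A and (B̃_ε) of B such that [(Ã_ε ∩ B̃_ε)] = A ∩ B. -/
open Filter Topology Asymptotics

noncomputable section

namespace ColombeauPaper

variable {ι κ : Type*} {E : Type*} [AddCommGroup E] [Module ℝ E]
  {F : Type*} [AddCommGroup F] [Module ℝ F]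

lemma internalSet_mono (p : ι → Seminorm ℝ E) {X Y : ℝ → Set E} (h : ∀ ε, X ε ⊆ Y ε) :
    internalSet p X ⊆ internalSet p Y := by
  rintro u ⟨w, hw, hev⟩
  exact ⟨w, hw, hev.mono fun ε hε => h ε hε⟩

lemma zpow_neg_mono {ε : ℝ} (hε : 0 < ε) (hε1 : ε ≤ 1) {k l : ℕ} (hkl : k ≤ l) :
    ε ^ (-(k : ℤ)) ≤ ε ^ (-(l : ℤ)) := by
  have hinv : (1 : ℝ) ≤ ε⁻¹ := (one_le_inv₀ hε).2 hε1
  rw [zpow_neg_natCast_eq, zpow_neg_natCast_eq]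
  exact zpow_le_zpow_right₀ hinv (by exact_mod_cast hkl)

/-- Key absorption lemma: if `(C_ε)` is sharply bounded, eventually nonempty, and its internal
set is contained in the internal set of `(A_ε)`, then the internal set of `(A_ε ∪ C_ε)` is
contained in the internal set of `(A_ε)`. -/
lemma internal_union_subset (p : ι → Seminorm ℝ E) (Anet Cnet : ℝ → Set E)
    (hC : SharplyBoundedNet p Cnet)
    (hne : ∀ᶠ ε in 𝓝[>] (0 : ℝ), (Cnet ε).Nonempty)
    (hsub : internalSet p Cnet ⊆ internalSet p Anet) :
    internalSet p (fun ε => Anet ε ∪ Cnet ε) ⊆ internalSet p Anet := by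
  rintro u ⟨uW, huW, hev⟩
  classical
  -- the auxiliary net `w`, always in `C_ε` when nonempty, equal to `uW` when possible
  set w : ℝ → E := fun ε =>
    if (uW : ℝ → E) ε ∈ Cnet ε then (uW : ℝ → E) ε
    else if h2 : (Cnet ε).Nonempty then h2.some else 0 with hw_def
  have hwC : ∀ ε, (Cnet ε).Nonempty → w ε ∈ Cnet ε := by
    intro ε hεne
    by_cases h : (uW : ℝ → E) ε ∈ Cnet ε
    · simpa [hw_def, h]
    · simp only [hw_def, h, if_false, dif_pos hεne]
      exact hεne.some_mem
  have hwmod : IsModerate p w := by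
    intro i
    obtain ⟨M, hM⟩ := hC i
    refine ⟨M, ?_⟩
    filter_upwards [hM, hne] with ε h1 h2
    exact h1 _ (hwC ε h2)
  set W : moderateGroup p := ⟨w, hwmod⟩ with hW_def
  have hWC : (QuotientAddGroup.mk W : Colombeau p) ∈ internalSet p Cnet := by
    refine ⟨W, rfl, ?_⟩
    filter_upwards [hne] with ε h
    exact hwC ε h
  obtain ⟨a', ha'1, ha'2⟩ := hsub hWC
  have hd : IsNegligible p ((a' - W : moderateGroup p) : ℝ → E) := by
    have : a' - W ∈ negligibleGroup p := (QuotientAddGroup.eq_iff_sub_mem).1 ha'1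
    exact this
  -- the modified representative
  set v : ℝ → E := fun ε =>
    if (uW : ℝ → E) ε ∈ Anet ε then (uW : ℝ → E) ε else (a' : ℝ → E) ε with hv_def
  have hvmod : IsModerate p v := by
    intro i
    obtain ⟨M, hM⟩ := uW.2 i
    obtain ⟨N, hN⟩ := a'.2 i
    refine ⟨max M N, ?_⟩
    filter_upwards [hM, hN, small_mem] with ε h1 h2 h3
    obtain ⟨hε, hε2⟩ := h3
    have hε1 : ε ≤ 1 := by linarith
    by_cases h : (uW : ℝ → E) ε ∈ Anet ε
    · simp only [hv_def, h, if_true]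
      exact h1.trans (zpow_neg_mono hε hε1 (le_max_left _ _))
    · simp only [hv_def, h, if_false]
      exact h2.trans (zpow_neg_mono hε hε1 (le_max_right _ _))
  set V : moderateGroup p := ⟨v, hvmod⟩ with hV_def
  have hneg : IsNegligible p ((uW - V : moderateGroup p) : ℝ → E) := by
    intro i m
    filter_upwards [hev, hd i m, self_mem_nhdsWithin] with ε h1 h2 h3
    have hε : (0 : ℝ) < ε := h3
    have hcoe : ((uW - V : moderateGroup p) : ℝ → E) ε = (uW : ℝ → E) ε - v ε := rfl
    by_cases h : (uW : ℝ → E) ε ∈ Anet ε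
    · rw [hcoe]
      simp only [hv_def, h, if_true, sub_self, map_zero]
      positivity
    · have huC : (uW : ℝ → E) ε ∈ Cnet ε := h1.resolve_left h
      have hwε : w ε = (uW : ℝ → E) ε := by simp [hw_def, huC]
      have hdcoe : ((a' - W : moderateGroup p) : ℝ → E) ε = (a' : ℝ → E) ε - w ε := rfl
      rw [hcoe]
      simp only [hv_def, h, if_false]
      calc p i ((uW : ℝ → E) ε - (a' : ℝ → E) ε)
          = p i ((a' : ℝ → E) ε - (uW : ℝ → E) ε) := by
            rw [← map_neg_eq_map (p i), neg_sub]
        _ = p i (((a' - W : moderateGroup p) : ℝ → E) ε) := by rw [hdcoe, hwε]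
        _ ≤ ε ^ m := h2
  refine ⟨V, ?_, ?_⟩
  · rw [← huW]
    symm
    rw [QuotientAddGroup.eq_iff_sub_mem]
    exact hneg
  · filter_upwards [hev, ha'2] with ε h1 h2
    by_cases h : (uW : ℝ → E) ε ∈ Anet ε
    · show v ε ∈ Anet ε; simpa [hv_def, h]
    · show v ε ∈ Anet ε; simpa [hv_def, h] using h2

/-- With `(p_n)` increasing and `A`, `B` internal: if `A ∩ B` is internal
with a sharply bounded representative net, then there are representative nets `(Ã_ε)` of `A`
and `(B̃_ε)` of `B` with `[(Ã_ε ∩ B̃_ε)] = A ∩ B`. -/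
theorem intersection_representatives
    {E : Type*} [AddCommGroup E] [Module ℝ E]
    (p : ℕ → Seminorm ℝ E) (hp : Monotone p)
    (A B : Set (Colombeau p)) (hA : IsInternal p A) (hB : IsInternal p B)
    (hbdd : ∃ Cnet : ℝ → Set E, SharplyBoundedNet p Cnet ∧ A ∩ B = internalSet p Cnet) :
    ∃ Anet Bnet : ℝ → Set E, A = internalSet p Anet ∧ B = internalSet p Bnet ∧
      internalSet p (fun ε => Anet ε ∩ Bnet ε) = A ∩ B := by
  obtain ⟨Cnet, hCb, hCeq⟩ := hbdd
  obtain ⟨Anet0, hA0⟩ := hA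
  obtain ⟨Bnet0, hB0⟩ := hB
  by_cases hne : ∀ᶠ ε in 𝓝[>] (0 : ℝ), (Cnet ε).Nonempty
  · -- main case: enlarge both nets by `C`
    have hCA : internalSet p Cnet ⊆ internalSet p Anet0 := by
      rw [← hCeq, ← hA0]; exact Set.inter_subset_left
    have hCB : internalSet p Cnet ⊆ internalSet p Bnet0 := by
      rw [← hCeq, ← hB0]; exact Set.inter_subset_right
    have hAeq : A = internalSet p (fun ε => Anet0 ε ∪ Cnet ε) := by
      apply Set.Subset.antisymm
      · rw [hA0]; exact internalSet_mono p fun ε => Set.subset_union_left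
      · rw [hA0]; exact internal_union_subset p Anet0 Cnet hCb hne hCA
    have hBeq : B = internalSet p (fun ε => Bnet0 ε ∪ Cnet ε) := by
      apply Set.Subset.antisymm
      · rw [hB0]; exact internalSet_mono p fun ε => Set.subset_union_left
      · rw [hB0]; exact internal_union_subset p Bnet0 Cnet hCb hne hCB
    refine ⟨fun ε => Anet0 ε ∪ Cnet ε, fun ε => Bnet0 ε ∪ Cnet ε, hAeq, hBeq, ?_⟩
    apply Set.Subset.antisymm
    · intro u hu
      constructor
      · rw [hAeq]
        exact internalSet_mono p (fun ε => Set.inter_subset_left) hu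
      · rw [hBeq]
        exact internalSet_mono p (fun ε => Set.inter_subset_right) hu
    · rw [hCeq]
      exact internalSet_mono p fun ε =>
        Set.subset_inter (Set.subset_union_right) (Set.subset_union_right)
  · -- degenerate case: `C_ε` is frequently empty, so `A ∩ B = ∅`
    have hABempty : A ∩ B = ∅ := by
      rw [hCeq]
      rw [Set.eq_empty_iff_forall_notMem]
      rintro u ⟨wrep, -, hev⟩
      apply hne
      filter_upwards [hev] with ε h
      exact ⟨_, h⟩
    refine ⟨Anet0, Bnet0, hA0, hB0, ?_⟩
    rw [hABempty, Set.eq_empty_iff_forall_notMem]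
    intro u hu
    have h1 : u ∈ internalSet p Anet0 :=
      internalSet_mono p (fun ε => Set.inter_subset_left) hu
    have h2 : u ∈ internalSet p Bnet0 :=
      internalSet_mono p (fun ε => Set.inter_subset_right) hu
    have : u ∈ A ∩ B := ⟨hA0 ▸ h1, hB0 ▸ h2⟩
    rw [hABempty] at this
    exact this

end ColombeauPaper
end
end

section
/- (Saturation) Suppose the topology of E is generated by an increasing sequence of seminorms (p_n)_{n∈ℕ}. Let (A_n)_{n∈ℕ} be a decreasing chain A_1 ⊇ A_2 ⊇ ⋯ of non-empty internal subsets of G_E, and suppose there is a sequence of positive real numbers (t_n)_{n∈ℕ} such that p_n(v) ≤ α^{−t_n} for all v ∈ A_n and all n ∈ ℕ. Then ⋂_{n∈ℕ} A_n ≠ ∅. -/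
open Filter Topology Asymptotics

noncomputable section

namespace ColombeauPaper

variable {ι κ : Type*} {E : Type*} [AddCommGroup E] [Module ℝ E]
  {F : Type*} [AddCommGroup F] [Module ℝ F]

lemma one_le_rpow_neg' {ε t : ℝ} (hε : 0 < ε) (hε1 : ε ≤ 1) (ht : 0 ≤ t) : 1 ≤ ε ^ (-t) :=
  Real.one_le_rpow_of_pos_of_le_one_of_nonpos hε hε1 (neg_nonpos.2 ht)

lemma two_mul_rpow_le' {ε t : ℝ} {M : ℕ} (hε : 0 < ε) (hε2 : ε ≤ 1/2) (ht : 0 ≤ t)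
    (hM : t + 1 ≤ (M : ℝ)) : 2 * ε ^ (-t) ≤ ε ^ (-(M : ℤ)) := by
  have h1 : ε ≤ 1 := by linarith
  have hz : (ε : ℝ) ^ (-(M : ℤ)) = ε ^ (-(M : ℝ)) := by
    rw [← Real.rpow_intCast]; norm_num
  rw [hz]
  have hsplit : ε ^ (-(M : ℝ)) = ε ^ (-((M : ℝ) - t)) * ε ^ (-t) := by
    rw [← Real.rpow_add hε]; ring_nf
  rw [hsplit]
  have h2 : (2 : ℝ) ≤ ε ^ (-((M : ℝ) - t)) := by
    have ha : ε ^ (-(1 : ℝ)) ≤ ε ^ (-((M : ℝ) - t)) :=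
      Real.rpow_le_rpow_of_exponent_ge hε h1 (by linarith)
    have hb : ε ^ (-(1 : ℝ)) = ε⁻¹ := by rw [Real.rpow_neg_one]
    have hc : (2 : ℝ) ≤ ε⁻¹ := by nlinarith [mul_inv_cancel₀ hε.ne']
    linarith [hb ▸ ha]
  have hpos : (0 : ℝ) ≤ ε ^ (-t) := (Real.rpow_pos_of_pos hε _).le
  exact mul_le_mul_of_nonneg_right h2 hpos

/-- Combined conditions used in the saturation construction. -/
def SatCond {E : Type*} [AddCommGroup E] [Module ℝ E] (p : ℕ → Seminorm ℝ E)
    (Anet : ℕ → ℝ → Set E) (w : ℕ → ℕ → moderateGroup p) (t : ℕ → ℝ)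
    (n : ℕ) (ε : ℝ) : Prop :=
  ∀ k ∈ Set.Iic n, ∀ i ∈ Set.Iic n, ∀ m ∈ Set.Iic n, ∀ k' ∈ Set.Iic n,
    ((w n k : ℝ → E) ε ∈ Anet (min k n) ε) ∧
    (p i ((w n k : ℝ → E) ε) ≤ 2 * ε ^ (-(t i))) ∧
    (p i ((w n k : ℝ → E) ε - (w n k' : ℝ → E) ε) ≤ ε ^ m)

/-- **Saturation.** With `(p_n)` increasing, a decreasing chain of
non-empty internal subsets `A_n` of `𝒢_E` satisfying `p_n(v) ≤ α^{-t_n}` for all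
`v ∈ A_n` (with `t_n > 0`) has non-void intersection. -/
theorem saturation
    {E : Type*} [AddCommGroup E] [Module ℝ E]
    (p : ℕ → Seminorm ℝ E) (hp : Monotone p)
    (A : ℕ → Set (Colombeau p)) (hint : ∀ n, IsInternal p (A n))
    (hne : ∀ n, (A n).Nonempty) (hdec : ∀ n, A (n + 1) ⊆ A n)
    (t : ℕ → ℝ) (ht : ∀ n, 0 < t n)
    (hbd : ∀ n, ∀ v ∈ A n, seminormLeAlpha p n v (-(t n))) :
    (⋂ n, A n).Nonempty := by
  classical
  choose Anet hAnet using hint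
  choose u hu using hne
  have hanti : Antitone A := antitone_nat_of_succ_le hdec
  -- choose representatives of `u n` lying in `Anet (min k n)`
  have Hw : ∀ n k : ℕ, ∃ w : moderateGroup p,
      (QuotientAddGroup.mk w : Colombeau p) = u n ∧
      ∀ᶠ ε in 𝓝[>] (0:ℝ), (w : ℝ → E) ε ∈ Anet (min k n) ε := by
    intro n k
    have h1 : u n ∈ A (min k n) := hanti (min_le_right k n) (hu n)
    rw [hAnet] at h1
    exact h1
  choose w hw1 hw2 using Hw
  -- bound on the representatives
  have HB1 : ∀ n k i : ℕ, i ≤ n → ∀ᶠ ε in 𝓝[>] (0:ℝ),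
      p i ((w n k : ℝ → E) ε) ≤ 2 * ε ^ (-(t i)) := by
    intro n k i hi
    obtain ⟨z, nn, hz, hnn, hb⟩ := hbd i (u n) (hanti hi (hu n))
    have hmem : w n k - z ∈ negligibleGroup p := by
      rw [← QuotientAddGroup.eq_iff_sub_mem, hw1, hz]
    have hneg : IsNegligible p ((w n k - z : moderateGroup p) : ℝ → E) := hmem
    filter_upwards [hb, hnn 1, hneg i 1, small_mem] with ε h1 h2 h3 h4
    obtain ⟨hε, hε2⟩ := h4
    have hsub : ((w n k - z : moderateGroup p) : ℝ → E) ε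
        = (w n k : ℝ → E) ε - (z : ℝ → E) ε := rfl
    rw [hsub, pow_one] at h3
    have tri : p i ((w n k : ℝ → E) ε)
        ≤ p i ((z : ℝ → E) ε) + p i ((w n k : ℝ → E) ε - (z : ℝ → E) ε) := by
      have := map_add_le_add (p i) ((z : ℝ → E) ε)
        ((w n k : ℝ → E) ε - (z : ℝ → E) ε)
      simpa using this
    have hone : (1:ℝ) ≤ ε ^ (-(t i)) := one_le_rpow_neg' hε (by linarith) (ht i).le
    have hn1 : nn ε ≤ ε := by
      have := (abs_le.mp (by simpa using h2)).2
      simpa using this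
    linarith
  -- negligibility of differences of representatives
  have HB2 : ∀ n k k' i m : ℕ, ∀ᶠ ε in 𝓝[>] (0:ℝ),
      p i ((w n k : ℝ → E) ε - (w n k' : ℝ → E) ε) ≤ ε ^ m := by
    intro n k k' i m
    have hmem : w n k - w n k' ∈ negligibleGroup p := by
      rw [← QuotientAddGroup.eq_iff_sub_mem, hw1, hw1]
    have hneg : IsNegligible p ((w n k - w n k' : moderateGroup p) : ℝ → E) := hmem
    filter_upwards [hneg i m] with ε h
    exact h
  -- the combined eventual condition
  have hCond : ∀ n : ℕ, ∀ᶠ ε in 𝓝[>] (0:ℝ), SatCond p Anet w t n ε := by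
    intro n
    unfold SatCond
    rw [eventually_all_finite (Set.finite_Iic n)]
    intro k hk
    rw [eventually_all_finite (Set.finite_Iic n)]
    intro i hi
    rw [eventually_all_finite (Set.finite_Iic n)]
    intro m _
    rw [eventually_all_finite (Set.finite_Iic n)]
    intro k' _
    filter_upwards [hw2 n k, HB1 n k i hi, HB2 n k k' i m] with ε h1 h2 h3
    exact ⟨h1, h2, h3⟩
  -- extract thresholds
  have Hη : ∀ n : ℕ, ∃ η : ℝ, 0 < η ∧ ∀ ε : ℝ, 0 < ε → ε < η → SatCond p Anet w t n ε := by
    intro n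
    obtain ⟨ηn, hη1, hη2⟩ := mem_nhdsGT_iff_exists_Ioo_subset.mp (hCond n)
    exact ⟨ηn, hη1, fun ε h1 h2 => hη2 ⟨h1, h2⟩⟩
  choose η hηpos hη using Hη
  -- the decreasing scale
  let δ : ℕ → ℝ := fun n =>
    Nat.rec (min (η 0) 1 / 2)
      (fun n ih => min ih (min (η (n+1)) (1/(n+2 : ℝ))) / 2) n
  have hδ0 : δ 0 = min (η 0) 1 / 2 := rfl
  have hδs : ∀ n, δ (n+1) = min (δ n) (min (η (n+1)) (1/(n+2 : ℝ))) / 2 := fun n => rfl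
  have hδpos : ∀ n, 0 < δ n := by
    intro n
    induction n with
    | zero => rw [hδ0]; have := hηpos 0; positivity
    | succ n ih =>
      rw [hδs n]
      have h1 : (0:ℝ) < 1/(n+2 : ℝ) := by positivity
      have := hηpos (n+1)
      positivity
  have hδlt : ∀ n, δ n < η n := by
    intro n
    cases n with
    | zero =>
      rw [hδ0]
      have h1 := min_le_left (η 0) 1
      have h2 := hηpos 0
      linarith
    | succ n =>
      rw [hδs n]
      have h1 := min_le_right (δ n) (min (η (n+1)) (1/(n+2 : ℝ)))
      have h2 := min_le_left (η (n+1)) (1/(n+2 : ℝ))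
      have h3 := hηpos (n+1)
      linarith
  have hδsucc : ∀ n, δ (n+1) < δ n := by
    intro n
    rw [hδs n]
    have h1 := min_le_left (δ n) (min (η (n+1)) (1/(n+2 : ℝ)))
    have h2 := hδpos n
    linarith
  have hδanti : Antitone δ := antitone_nat_of_succ_le fun n => (hδsucc n).le
  have hδbound : ∀ n : ℕ, δ n ≤ 1/((n:ℝ)+1) := by
    intro n
    cases n with
    | zero =>
      rw [hδ0]
      have h1 := min_le_right (η 0) 1
      norm_num
      linarith
    | succ n =>
      rw [hδs n]
      have h1 := min_le_right (δ n) (min (η (n+1)) (1/(n+2 : ℝ)))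
      have h2 := min_le_right (η (n+1)) (1/(n+2 : ℝ))
      have h3 : (0:ℝ) < 1/(n+2 : ℝ) := by positivity
      push_cast
      have h5 : ((n:ℝ) + 1 + 1) = (n:ℝ) + 2 := by ring
      rw [h5]
      linarith
  have hδhalf : δ 0 ≤ 1/2 := by
    rw [hδ0]
    have := min_le_right (η 0) 1
    linarith
  have hKey : ∀ n (ε : ℝ), 0 < ε → ε ≤ δ n → SatCond p Anet w t n ε :=
    fun n ε h1 h2 => hη n ε h1 (lt_of_le_of_lt h2 (hδlt n))
  -- the level function
  have hex : ∀ ε : ℝ, 0 < ε → ∃ n, δ n < ε := by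
    intro ε hε
    obtain ⟨n, hn⟩ := exists_nat_one_div_lt hε
    exact ⟨n, lt_of_le_of_lt (hδbound n) hn⟩
  let L : ℝ → ℕ := fun ε => sInf {n : ℕ | δ n < ε} - 1
  have hL1 : ∀ ε, 0 < ε → ε ≤ δ 0 → ε ≤ δ (L ε) := by
    intro ε h h0
    have hne : {n : ℕ | δ n < ε}.Nonempty := hex ε h
    have hne0 : sInf {n : ℕ | δ n < ε} ≠ 0 := by
      intro hc
      have := Nat.sInf_mem hne
      rw [hc] at this
      exact absurd this (not_lt.2 h0)
    have hlt : L ε < sInf {n : ℕ | δ n < ε} := by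
      show sInf {n : ℕ | δ n < ε} - 1 < sInf {n : ℕ | δ n < ε}
      omega
    have := Nat.notMem_of_lt_sInf hlt
    exact not_lt.1 this
  have hL2 : ∀ k : ℕ, ∀ᶠ ε in 𝓝[>] (0:ℝ), k ≤ L ε := by
    intro k
    filter_upwards [Ioc_mem_nhdsGT (hδpos (k+1))] with ε hε
    obtain ⟨h1, h2⟩ := hε
    have hne : {n : ℕ | δ n < ε}.Nonempty := hex ε h1
    have hmem : δ (sInf {n : ℕ | δ n < ε}) < ε := Nat.sInf_mem hne
    have hfind : k + 1 < sInf {n : ℕ | δ n < ε} := by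
      by_contra hc
      push_neg at hc
      exact absurd hmem (not_lt.2 (le_trans h2 (hδanti hc)))
    show k ≤ sInf {n : ℕ | δ n < ε} - 1
    omega
  have hIoc : Set.Ioc (0:ℝ) (δ 0) ∈ 𝓝[>] (0:ℝ) := Ioc_mem_nhdsGT (hδpos 0)
  -- the glued nets
  have hmodG : ∀ k : ℕ, IsModerate p (fun ε => (w (max (L ε) k) k : ℝ → E) ε) := by
    intro k i
    obtain ⟨M, hM⟩ := exists_nat_ge (t i + 1)
    refine ⟨M, ?_⟩
    filter_upwards [hL2 (max i k), hIoc] with ε hLε hε0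
    obtain ⟨hε, hεδ0⟩ := hε0
    have hε2 : ε ≤ 1/2 := le_trans hεδ0 hδhalf
    have hδL : ε ≤ δ (L ε) := hL1 ε hε hεδ0
    have hkL : k ≤ L ε := le_trans (le_max_right i k) hLε
    have hiL : i ≤ L ε := le_trans (le_max_left i k) hLε
    have hmax : max (L ε) k = L ε := max_eq_left hkL
    have hc := hKey (L ε) ε hε hδL k (Set.mem_Iic.mpr hkL) i (Set.mem_Iic.mpr hiL)
      0 (Set.mem_Iic.mpr (Nat.zero_le _)) 0 (Set.mem_Iic.mpr (Nat.zero_le _))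
    have h2 := hc.2.1
    simp only [hmax]
    exact h2.trans (two_mul_rpow_le' hε hε2 (ht i).le hM)
  let G : ℕ → moderateGroup p := fun k =>
    ⟨fun ε => (w (max (L ε) k) k : ℝ → E) ε, hmodG k⟩
  have hGneg : ∀ k, G k - G 0 ∈ negligibleGroup p := by
    intro k
    show IsNegligible p ((G k - G 0 : moderateGroup p) : ℝ → E)
    intro i m
    filter_upwards [hL2 (max (max i m) k), hIoc] with ε hLε hε0
    obtain ⟨hε, hεδ0⟩ := hε0
    have hδL : ε ≤ δ (L ε) := hL1 ε hε hεδ0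
    have hkL : k ≤ L ε := le_trans (le_max_right _ _) hLε
    have hiL : i ≤ L ε := le_trans (le_trans (le_max_left i m) (le_max_left _ k)) hLε
    have hmL : m ≤ L ε := le_trans (le_trans (le_max_right i m) (le_max_left _ k)) hLε
    have hmax : max (L ε) k = L ε := max_eq_left hkL
    have hmax0 : max (L ε) 0 = L ε := max_eq_left (Nat.zero_le _)
    have hc := hKey (L ε) ε hε hδL k (Set.mem_Iic.mpr hkL) i (Set.mem_Iic.mpr hiL)
      m (Set.mem_Iic.mpr hmL) 0 (Set.mem_Iic.mpr (Nat.zero_le _))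
    have h3 := hc.2.2
    show p i ((w (max (L ε) k) k : ℝ → E) ε - (w (max (L ε) 0) 0 : ℝ → E) ε) ≤ ε ^ m
    rw [hmax, hmax0]
    exact h3
  refine ⟨QuotientAddGroup.mk (G 0), Set.mem_iInter.mpr ?_⟩
  intro k
  rw [hAnet k]
  refine ⟨G k, (QuotientAddGroup.eq_iff_sub_mem).mpr (hGneg k), ?_⟩
  filter_upwards [hL2 k, hIoc] with ε hkL hε0
  obtain ⟨hε, hεδ0⟩ := hε0
  have hδL : ε ≤ δ (L ε) := hL1 ε hε hεδ0
  have hmax : max (L ε) k = L ε := max_eq_left hkL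
  have hc := hKey (L ε) ε hε hδL k (Set.mem_Iic.mpr hkL)
    0 (Set.mem_Iic.mpr (Nat.zero_le _)) 0 (Set.mem_Iic.mpr (Nat.zero_le _))
    0 (Set.mem_Iic.mpr (Nat.zero_le _))
  have h1 := hc.1
  rw [min_eq_left hkL] at h1
  show (w (max (L ε) k) k : ℝ → E) ε ∈ Anet k ε
  rw [hmax]
  exact h1

end ColombeauPaper
end
end

section
/- Let E and F be locally convex spaces. (1) If A = [(A_ε)] ⊆ G_E and B = [(B_ε)] ⊆ G_F are internal, then, under the canonical identification G_{E×F} ≅ G_E × G_F, the product A × B = [(A_ε × B_ε)] is an internal subset of G_E × G_F. (2) If A = [(A_ε)] ⊆ G_E × G_F is internal, then the projection proj_{G_E}(A) of A onto G_E satisfies proj_{G_E}(A) ⊆ [(proj_E(A_ε))]; if in addition A has a sharply bounded representative net, then proj_{G_E}(A) = [(proj_E(A_ε))] and hence proj_{G_E}(A) is internal. -/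
open Filter Topology Asymptotics

noncomputable section

namespace ColombeauPaper

variable {ι κ : Type*} {E : Type*} [AddCommGroup E] [Module ℝ E]
  {F : Type*} [AddCommGroup F] [Module ℝ F]

lemma zpow_mono_small {ε : ℝ} (hε : 0 < ε) (hε1 : ε ≤ 1 / 2) {k l : ℕ} (hkl : k ≤ l) :
    ε ^ (-(k : ℤ)) ≤ ε ^ (-(l : ℤ)) := by
  rw [zpow_neg_natCast_eq, zpow_neg_natCast_eq]
  exact zpow_le_zpow_right₀ ((one_le_inv₀ hε).2 (by linarith)) (by exact_mod_cast hkl)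

lemma prodIdent_mk {E : Type*} [AddCommGroup E] [Module ℝ E]
    {F : Type*} [AddCommGroup F] [Module ℝ F]
    {ι κ : Type*} [Nonempty ι] [Nonempty κ]
    (p : ι → Seminorm ℝ E) (q : κ → Seminorm ℝ F)
    (w : moderateGroup (prodSeminorm p q)) :
    prodIdent p q (QuotientAddGroup.mk w) =
      (QuotientAddGroup.mk (prodFstAux p q w), QuotientAddGroup.mk (prodSndAux p q w)) := rfl

/-- (1) Under the canonical identification `𝒢_{E×F} ≅ 𝒢_E × 𝒢_F`,
the product of internal sets: `A × B = [(A_ε × B_ε)]` is internal in `𝒢_E × 𝒢_F`.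
(2) The projection of an internal subset of `𝒢_E × 𝒢_F` onto `𝒢_E` is contained in
`[(proj_E(A_ε))]`, with equality (hence internality) when there is a sharply bounded
representative net. -/
theorem products_and_projections
    {E : Type*} [AddCommGroup E] [Module ℝ E] {F : Type*} [AddCommGroup F] [Module ℝ F]
    {ι κ : Type*} [Nonempty ι] [Nonempty κ]
    (p : ι → Seminorm ℝ E) (q : κ → Seminorm ℝ F) :
    (∀ (Anet : ℝ → Set E) (Bnet : ℝ → Set F),
      internalSet p Anet ×ˢ internalSet q Bnet =
        prodIdent p q '' internalSet (prodSeminorm p q) (fun ε => Anet ε ×ˢ Bnet ε) ∧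
      IsInternalProd p q (internalSet p Anet ×ˢ internalSet q Bnet)) ∧
    (∀ Cnet : ℝ → Set (E × F),
      Prod.fst '' (prodIdent p q '' internalSet (prodSeminorm p q) Cnet) ⊆
        internalSet p (fun ε => Prod.fst '' Cnet ε)) ∧
    (∀ Cnet : ℝ → Set (E × F), SharplyBoundedNet (prodSeminorm p q) Cnet →
      Prod.fst '' (prodIdent p q '' internalSet (prodSeminorm p q) Cnet) =
        internalSet p (fun ε => Prod.fst '' Cnet ε)) := by
  classical
  have proj_sub : ∀ Cnet : ℝ → Set (E × F),
      Prod.fst '' (prodIdent p q '' internalSet (prodSeminorm p q) Cnet) ⊆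
        internalSet p (fun ε => Prod.fst '' Cnet ε) := by
    intro Cnet u hu
    obtain ⟨y, ⟨x, ⟨w, rfl, hev⟩, rfl⟩, rfl⟩ := hu
    rw [prodIdent_mk]
    refine ⟨prodFstAux p q w, rfl, ?_⟩
    filter_upwards [hev] with ε h
    exact ⟨_, h, rfl⟩
  refine ⟨?_, proj_sub, ?_⟩
  · intro Anet Bnet
    have hEq : internalSet p Anet ×ˢ internalSet q Bnet =
        prodIdent p q '' internalSet (prodSeminorm p q) (fun ε => Anet ε ×ˢ Bnet ε) := by
      ext uv
      constructor
      · rintro ⟨⟨a, ha, haA⟩, ⟨b, hb, hbB⟩⟩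
        have hmod : IsModerate (prodSeminorm p q)
            (fun ε => ((a : ℝ → E) ε, (b : ℝ → F) ε)) := by
          rintro ⟨i, j⟩
          obtain ⟨M, hM⟩ := a.2 i
          obtain ⟨N, hN⟩ := b.2 j
          refine ⟨max M N, ?_⟩
          filter_upwards [hM, hN, small_mem] with ε h1 h2 h3
          rw [prodSeminorm_apply]
          exact max_le (h1.trans (zpow_mono_small h3.1 h3.2 (le_max_left _ _)))
            (h2.trans (zpow_mono_small h3.1 h3.2 (le_max_right _ _)))
        set w : moderateGroup (prodSeminorm p q) := ⟨_, hmod⟩ with hw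
        refine ⟨QuotientAddGroup.mk w, ⟨w, rfl, ?_⟩, ?_⟩
        · filter_upwards [haA, hbB] with ε h1 h2
          exact ⟨h1, h2⟩
        · rw [prodIdent_mk]
          have h1 : prodFstAux p q w = a := Subtype.ext rfl
          have h2 : prodSndAux p q w = b := Subtype.ext rfl
          rw [h1, h2, ha, hb]
      · rintro ⟨x, ⟨w, rfl, hev⟩, rfl⟩
        rw [prodIdent_mk]
        refine ⟨⟨prodFstAux p q w, rfl, ?_⟩, ⟨prodSndAux p q w, rfl, ?_⟩⟩
        · filter_upwards [hev] with ε h; exact h.1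
        · filter_upwards [hev] with ε h; exact h.2
    exact ⟨hEq, ⟨fun ε => Anet ε ×ˢ Bnet ε, hEq⟩⟩
  · intro Cnet hSB
    refine subset_antisymm (proj_sub Cnet) ?_
    rintro u ⟨a, ha, haev⟩
    set sel : ℝ → E × F := fun ε =>
      if h : ∃ z, z ∈ Cnet ε ∧ z.1 = (a : ℝ → E) ε then h.choose else 0 with hsel
    have hevSel : ∀ᶠ ε in 𝓝[>] (0 : ℝ),
        sel ε ∈ Cnet ε ∧ (sel ε).1 = (a : ℝ → E) ε := by
      filter_upwards [haev] with ε hε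
      have h : ∃ z, z ∈ Cnet ε ∧ z.1 = (a : ℝ → E) ε := hε
      simp only [hsel, dif_pos h]
      exact h.choose_spec
    have hmod : IsModerate (prodSeminorm p q) sel := by
      intro ij
      obtain ⟨M, hM⟩ := hSB ij
      refine ⟨M, ?_⟩
      filter_upwards [hM, hevSel] with ε h1 h2
      exact h1 _ h2.1
    set w : moderateGroup (prodSeminorm p q) := ⟨sel, hmod⟩ with hw
    refine ⟨prodIdent p q (QuotientAddGroup.mk w),
      ⟨QuotientAddGroup.mk w, ⟨w, rfl, ?_⟩, rfl⟩, ?_⟩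
    · filter_upwards [hevSel] with ε h; exact h.1
    · rw [prodIdent_mk]
      show QuotientAddGroup.mk (prodFstAux p q w) = u
      rw [← ha, QuotientAddGroup.eq]
      show IsNegligible p _
      intro i m
      filter_upwards [hevSel, self_mem_nhdsWithin] with ε h hε
      have hz : ((-(prodFstAux p q w) + a : moderateGroup p) : ℝ → E) ε
          = -(sel ε).1 + (a : ℝ → E) ε := rfl
      rw [hz, h.2, neg_add_cancel, map_zero]
      have hε' : (0 : ℝ) < ε := hε
      positivity

end ColombeauPaper
end
end
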